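/- arXiv:1901.05843 — 9 statements merged into one kernel-verified Lean document; each statement's English description precedes it below -/
import Mathlib

section
/- Let (a_n) be a sequence of positive real numbers and K ≥ 1 an integer. Suppose there is a sequence (s_n) of real numbers such that for all sufficiently large n, a_n/a_{n+1} = 1 + 1/n + (1/n)·∑_{i=1}^{K-1} 1/(∏_{k=1}^{i} ln_{(k)} n) + s_n/(n·∏_{k=1}^{K} ln_{(k)} n). If liminf_{n→∞} s_n > 1, then the series ∑_{n=1}^∞ a_n converges. -/
open Filter Real Finset

namespace EBDM

noncomputable def P (K : ℕ) (x : ℝ) : ℝ := ∏ k ∈ Finset.Icc 1 K, Real.log^[k] x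

noncomputable def g (K : ℕ) (x : ℝ) : ℝ := x * P K x

noncomputable def h : ℕ → ℝ → ℝ
  | 0, _ => 1
  | K+1, x => h K x * Real.log^[K+1] x + 1

noncomputable def h' : ℕ → ℝ → ℝ
  | 0, _ => 0
  | K+1, x => h' K x * Real.log^[K+1] x + h K x / (x * P K x)

def Good (K : ℕ) (x : ℝ) : Prop := ∀ j ≤ K, 1 ≤ Real.log^[j] x

lemma Good.mono {K k : ℕ} {x : ℝ} (hkK : k ≤ K) (hx : Good K x) : Good k x :=
  fun j hj => hx j (hj.trans hkK)

lemma Good.one_le_x {K : ℕ} {x : ℝ} (hx : Good K x) : 1 ≤ x := by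
  simpa using hx 0 (Nat.zero_le _)

lemma P_zero (x : ℝ) : P 0 x = 1 := by
  rw [P, Finset.Icc_eq_empty_of_lt (by norm_num : (0:ℕ)+1 > 0)]; exact Finset.prod_empty

lemma P_succ (K : ℕ) (x : ℝ) : P (K+1) x = P K x * Real.log^[K+1] x := by
  rw [P, P, Finset.prod_Icc_succ_top (Nat.succ_le_succ (Nat.zero_le _))]

lemma one_le_P {K : ℕ} {x : ℝ} (hx : Good K x) : 1 ≤ P K x := by
  rw [P]
  calc (1:ℝ) = ∏ _k ∈ Finset.Icc 1 K, 1 := by rw [Finset.prod_const_one]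
    _ ≤ ∏ k ∈ Finset.Icc 1 K, Real.log^[k] x :=
        Finset.prod_le_prod (by intros; norm_num)
          (fun j hj => hx j (Finset.mem_Icc.mp hj).2)

lemma P_ne_zero {K : ℕ} {x : ℝ} (hx : Good K x) : P K x ≠ 0 :=
  (lt_of_lt_of_le one_pos (one_le_P hx)).ne'

lemma g_pos {K : ℕ} {x : ℝ} (hx : Good K x) : 0 < g K x :=
  mul_pos (lt_of_lt_of_le one_pos hx.one_le_x) (lt_of_lt_of_le one_pos (one_le_P hx))

lemma derivL {K : ℕ} {x : ℝ} (hx : Good K x) :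
    HasDerivAt (Real.log^[K+1]) (1/(x * P K x)) x := by
  induction K with
  | zero =>
    have h1 : (1:ℝ)/(x * P 0 x) = x⁻¹ := by rw [P_zero]; field_simp
    rw [h1]
    simpa using Real.hasDerivAt_log
      (lt_of_lt_of_le one_pos hx.one_le_x).ne'
  | succ K ih =>
    have hgood : Good K x := hx.mono (Nat.le_succ _)
    have hne : Real.log^[K+1] x ≠ 0 :=
      (lt_of_lt_of_le one_pos (hx (K+1) le_rfl)).ne'
    have hd := (ih hgood).log hne
    have hfun : Real.log^[K+2] = fun y => Real.log (Real.log^[K+1] y) := by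
      funext y; rw [Function.iterate_succ_apply']
    rw [hfun]
    convert hd using 1
    rw [P_succ]
    have hxne : x ≠ 0 := (lt_of_lt_of_le one_pos hx.one_le_x).ne'
    field_simp

lemma derivg {K : ℕ} {x : ℝ} (hx : Good K x) : HasDerivAt (g K) (h K x) x := by
  induction K with
  | zero =>
    have : g 0 = fun y : ℝ => y := by funext y; simp [g, P_zero]
    rw [this, show h 0 x = 1 from rfl]
    exact hasDerivAt_id x
  | succ K ih =>
    have hgood : Good K x := hx.mono (Nat.le_succ _)
    have hfun : g (K+1) = fun y => g K y * Real.log^[K+1] y := by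
      funext y; rw [g, g, P_succ, mul_assoc]
    rw [hfun]
    have hd : HasDerivAt (fun y => g K y * Real.log^[K+1] y) _ x := (ih hgood).mul (derivL hgood)
    convert hd using 1
    show h K x * Real.log^[K+1] x + 1 = _
    have hne : x * P K x ≠ 0 :=
      mul_ne_zero (lt_of_lt_of_le one_pos hx.one_le_x).ne' (P_ne_zero hgood)
    rw [g]
    field_simp
    rw [div_self hne]

lemma derivh {K : ℕ} {x : ℝ} (hx : Good K x) : HasDerivAt (h K) (h' K x) x := by
  induction K with
  | zero =>
    show HasDerivAt (fun _ : ℝ => (1:ℝ)) 0 x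
    exact hasDerivAt_const x 1
  | succ K ih =>
    have hgood : Good K x := hx.mono (Nat.le_succ _)
    have hfun : h (K+1) = fun y => h K y * Real.log^[K+1] y + 1 := by
      funext y; rfl
    rw [hfun]
    have hd : HasDerivAt (fun y => h K y * Real.log^[K+1] y + 1) _ x :=
      ((ih hgood).mul (derivL hgood)).add_const 1
    convert hd using 1
    show h' K x * Real.log^[K+1] x + h K x / (x * P K x) = _
    rw [mul_one_div]

lemma iter_le_log {K : ℕ} {x : ℝ} (hK : 1 ≤ K) (hx : Good K x) :
    Real.log^[K] x ≤ Real.log x := by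
  induction K with
  | zero => omega
  | succ K ih =>
    rcases Nat.lt_or_ge 1 (K+1) with h1 | h1
    · have hK1 : 1 ≤ K := by omega
      have hgood : Good K x := fun j hj => hx j (hj.trans (Nat.le_succ _))
      calc Real.log^[K+1] x = Real.log (Real.log^[K] x) :=
            Function.iterate_succ_apply' _ _ _
        _ ≤ Real.log^[K] x - 1 :=
            Real.log_le_sub_one_of_pos (lt_of_lt_of_le one_pos (hx K (Nat.le_succ _)))
        _ ≤ Real.log^[K] x := by linarith
        _ ≤ Real.log x := ih hK1 hgood
    · have : K = 0 := by omega
      subst this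
      simp

lemma one_le_h {K : ℕ} {x : ℝ} (hx : Good K x) : 1 ≤ h K x := by
  induction K with
  | zero => exact le_refl 1
  | succ K ih =>
    have h1 := ih (fun j hj => hx j (hj.trans (Nat.le_succ _)))
    have hL := hx (K+1) le_rfl
    show 1 ≤ h K x * Real.log^[K+1] x + 1
    nlinarith

lemma h_le {K : ℕ} {x : ℝ} (hx : Good K x) : h K x ≤ (K+1) * Real.log x ^ K := by
  induction K with
  | zero => show (1:ℝ) ≤ _; norm_num
  | succ K ih =>
    have hgood : Good K x := fun j hj => hx j (hj.trans (Nat.le_succ _))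
    have ih' := ih hgood
    have hlog : 1 ≤ Real.log x := by
      have := hx 1 (by omega); simpa using this
    have hL1 : 1 ≤ Real.log^[K+1] x := hx (K+1) le_rfl
    have hLle : Real.log^[K+1] x ≤ Real.log x := iter_le_log (by omega) hx
    have hpow : (1:ℝ) ≤ Real.log x ^ K := one_le_pow₀ hlog
    have hh1 : 1 ≤ h K x := one_le_h hgood
    push_cast
    show h K x * Real.log^[K+1] x + 1 ≤ ((K:ℝ)+1+1) * Real.log x ^ (K+1)
    have h1 : h K x * Real.log^[K+1] x ≤ ((K:ℝ)+1) * Real.log x ^ K * Real.log x :=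
      mul_le_mul ih' hLle (by linarith) (by positivity)
    have h2 : ((K:ℝ)+1) * Real.log x ^ K * Real.log x = ((K:ℝ)+1) * Real.log x ^ (K+1) := by
      rw [mul_assoc, ← pow_succ]
    have h3 : (1:ℝ) ≤ Real.log x ^ (K+1) := one_le_pow₀ hlog
    nlinarith

lemma h'_nonneg {K : ℕ} {x : ℝ} (hx : Good K x) : 0 ≤ h' K x := by
  induction K with
  | zero => exact le_refl 0
  | succ K ih =>
    have hgood : Good K x := hx.mono (Nat.le_succ _)
    have h1 := ih hgood
    have h2 := one_le_h hgood
    have hL := hx (K+1) le_rfl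
    have hx1 := hx.one_le_x
    have hP := one_le_P hgood
    show 0 ≤ h' K x * Real.log^[K+1] x + h K x / (x * P K x)
    have h3 : 0 ≤ h K x / (x * P K x) := by positivity
    nlinarith

lemma h'_le {K : ℕ} {x : ℝ} (hx : Good K x) :
    h' K x ≤ (K:ℝ)^2 * Real.log x ^ K / x := by
  induction K with
  | zero => show (0:ℝ) ≤ _; norm_num
  | succ K ih =>
    have hgood : Good K x := hx.mono (Nat.le_succ _)
    have ih' := ih hgood
    have hlog : 1 ≤ Real.log x := by
      have := hx 1 (by omega); simpa using this
    have hx1 := hx.one_le_x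
    have hxpos : (0:ℝ) < x := lt_of_lt_of_le one_pos hx1
    have hL1 : 1 ≤ Real.log^[K+1] x := hx (K+1) le_rfl
    have hLle : Real.log^[K+1] x ≤ Real.log x := iter_le_log (by omega) hx
    have hP := one_le_P hgood
    have hh' := h'_nonneg hgood
    have hhle := h_le hgood
    have hh1 := one_le_h hgood
    show h' K x * Real.log^[K+1] x + h K x / (x * P K x) ≤ _
    have t1 : h' K x * Real.log^[K+1] x ≤ ((K:ℝ)^2 * Real.log x ^ K / x) * Real.log x :=
      mul_le_mul ih' hLle (by linarith) (by positivity)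
    have t1' : ((K:ℝ)^2 * Real.log x ^ K / x) * Real.log x
        = (K:ℝ)^2 * Real.log x ^ (K+1) / x := by
      rw [div_mul_eq_mul_div, mul_assoc, ← pow_succ]
    have t2 : h K x / (x * P K x) ≤ ((K:ℝ)+1) * Real.log x ^ K / x := by
      apply div_le_div₀ (by positivity) hhle (by positivity)
      nlinarith
    have t3 : (K:ℝ)^2 * Real.log x ^ (K+1) / x + ((K:ℝ)+1) * Real.log x ^ K / x
        ≤ ((K:ℝ)+1)^2 * Real.log x ^ (K+1) / x := by
      rw [← add_div]
      gcongr ?_ / x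
      have hp : Real.log x ^ K ≤ Real.log x ^ (K+1) :=
        pow_le_pow_right₀ hlog (Nat.le_succ _)
      nlinarith [sq_nonneg ((K:ℝ))]

    push_cast
    linarith [t1, t2]

lemma hclosed {K : ℕ} (hK : 1 ≤ K) {x : ℝ} (hx : Good K x) :
    h K x = P K x + (∑ i ∈ Finset.Icc 1 (K-1), P K x / P i x) + 1 := by
  revert hx
  induction K, hK using Nat.le_induction with
  | base =>
    intro hx
    show h 0 x * Real.log^[0+1] x + 1 = _
    rw [show h 0 x = (1:ℝ) from rfl, one_mul,
      show (1:ℕ)-1 = 0 from rfl, Finset.Icc_eq_empty_of_lt (by norm_num : (0:ℕ) < 1),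
      Finset.sum_empty, P, Finset.Icc_self, Finset.prod_singleton]
    ring
  | succ n hn ih =>
    intro hx
    obtain ⟨m, rfl⟩ : ∃ m, n = m + 1 := ⟨n-1, by omega⟩
    have hgood : Good (m+1) x := hx.mono (Nat.le_succ _)
    have ihe := ih hgood
    rw [Nat.add_sub_cancel] at ihe ⊢
    show h (m+1) x * Real.log^[m+1+1] x + 1 = _
    rw [ihe, Finset.sum_Icc_succ_top (Nat.succ_le_succ (Nat.zero_le _)), P_succ (m+1)]
    have hPne : P (m+1) x ≠ 0 := P_ne_zero hgood
    have hsum : (∑ i ∈ Finset.Icc 1 m, P (m+1) x / P i x) * Real.log^[m+1+1] x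
        = ∑ i ∈ Finset.Icc 1 m, P (m+1) x * Real.log^[m+1+1] x / P i x := by
      rw [Finset.sum_mul]
      exact Finset.sum_congr rfl (fun i _ => by rw [div_mul_eq_mul_div])
    rw [add_mul, add_mul, hsum, one_mul, mul_div_cancel_left₀ _ hPne]
    ring

lemma tendsto_iter_log (k : ℕ) : Tendsto (Real.log^[k]) atTop atTop := by
  induction k with
  | zero => simpa using tendsto_id (α := ℝ)
  | succ k ih =>
    rw [Function.iterate_succ']
    exact Real.tendsto_log_atTop.comp ih

lemma eventually_good (K : ℕ) : ∀ᶠ x : ℝ in atTop, Good K x := by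
  have h2 : ∀ᶠ x : ℝ in atTop, ∀ j ∈ Finset.range (K+1), 1 ≤ Real.log^[j] x := by
    rw [Filter.eventually_all_finset]
    exact fun j _ => (tendsto_iter_log j).eventually_ge_atTop 1
  exact h2.mono (fun x hx j hj => hx j (Finset.mem_range.mpr (Nat.lt_succ_of_le hj)))

lemma key_diff {K : ℕ} (hK : 1 ≤ K) {δ : ℝ} (hδ : 0 < δ) :
    ∀ᶠ n : ℕ in atTop, g K ((n:ℝ)+1) - g K (n:ℝ) - h K (n:ℝ) ≤ δ := by
  obtain ⟨x₀, hx₀⟩ := Filter.eventually_atTop.mp (eventually_good K)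
  have hb0 : Tendsto (fun x : ℝ => Real.log x ^ K / (1 * x + -1)) atTop (nhds 0) :=
    Real.tendsto_pow_log_div_mul_add_atTop 1 (-1) K one_ne_zero
  have hb1 : Tendsto (fun x : ℝ => Real.log (x+1) ^ K / x) atTop (nhds 0) := by
    have hcomp := hb0.comp (tendsto_atTop_add_const_right atTop (1:ℝ) tendsto_id)
    convert hcomp using 2 with x
    simp
  have hb2 : Tendsto (fun x : ℝ => (K:ℝ)^2 * (Real.log (x+1) ^ K / x)) atTop (nhds 0) := by
    simpa using hb1.const_mul ((K:ℝ)^2)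
  have hb3 : ∀ᶠ x : ℝ in atTop, (K:ℝ)^2 * (Real.log (x+1) ^ K / x) < δ :=
    hb2.eventually (gt_mem_nhds hδ)
  have hcast : Tendsto (fun n : ℕ => (n:ℝ)) atTop atTop := tendsto_natCast_atTop_atTop
  filter_upwards [hcast.eventually hb3, hcast.eventually (eventually_ge_atTop x₀),
    hcast.eventually (eventually_ge_atTop (1:ℝ))] with n hbn hx₀n h1n
  set A : ℝ := (n:ℝ) with hA
  have hgoodall : ∀ y, A ≤ y → Good K y := fun y hy => hx₀ y (le_trans hx₀n hy)
  have hAlt : A < A + 1 := by linarith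
  -- MVT for g on [A, A+1]
  obtain ⟨ξ, hξmem, hξ⟩ := exists_hasDerivAt_eq_slope (g K) (h K) hAlt
    (fun y hy => ((derivg (hgoodall y hy.1)).continuousAt).continuousWithinAt)
    (fun y hy => derivg (hgoodall y hy.1.le))
  rw [add_sub_cancel_left, div_one] at hξ
  -- MVT for h on [A, ξ]
  obtain ⟨η, hηmem, hη⟩ := exists_hasDerivAt_eq_slope (h K) (h' K) hξmem.1
    (fun y hy => ((derivh (hgoodall y hy.1)).continuousAt).continuousWithinAt)
    (fun y hy => derivh (hgoodall y hy.1.le))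
  have hgη : Good K η := hgoodall η hηmem.1.le
  have hηpos : (0:ℝ) < η := lt_of_lt_of_le one_pos hgη.one_le_x
  have hlogη : 0 ≤ Real.log η := by
    have := hgη 1 hK; simp only [Function.iterate_one] at this; linarith
  have hbound : h' K η ≤ (K:ℝ)^2 * (Real.log (A+1) ^ K / A) := by
    have h1 := h'_le hgη
    have h2 : Real.log η ^ K ≤ Real.log (A+1) ^ K := by
      apply pow_le_pow_left₀ hlogη
      exact Real.log_le_log hηpos (le_trans hηmem.2.le (le_of_lt hξmem.2))
    have hApos : (0:ℝ) < A := by linarith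
    have h3 : Real.log η ^ K / η ≤ Real.log (A+1) ^ K / A :=
      div_le_div₀ (le_trans (by positivity) h2) h2 hApos hηmem.1.le
    calc h' K η ≤ (K:ℝ)^2 * Real.log η ^ K / η := h1
      _ = (K:ℝ)^2 * (Real.log η ^ K / η) := by rw [mul_div_assoc]
      _ ≤ (K:ℝ)^2 * (Real.log (A+1) ^ K / A) :=
          mul_le_mul_of_nonneg_left h3 (by positivity)
  have hfin : g K (A+1) - g K A - h K A = h' K η * (ξ - A) := by
    have hne : ξ - A ≠ 0 := sub_ne_zero.mpr (ne_of_gt hξmem.1)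
    rw [← hξ, hη, div_mul_cancel₀ _ hne]
  rw [hfin]
  have hξA : ξ - A ≤ 1 := by
    have := hξmem.2; linarith
  have h'η := h'_nonneg hgη
  calc h' K η * (ξ - A) ≤ h' K η * 1 := by
        apply mul_le_mul_of_nonneg_left hξA h'η
    _ = h' K η := mul_one _
    _ ≤ (K:ℝ)^2 * (Real.log (A+1) ^ K / A) := hbound
    _ ≤ δ := hbn.le

end EBDM


/-- **Extended Bertrand–De Morgan test, convergence part.**
Here `Real.log^[k] x` is the `k`-th iterate of the natural logarithm, i.e. `ln_{(k)} x`. -/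
theorem extended_bertrand_deMorgan_convergence
    (a : ℕ → ℝ) (ha : ∀ n, 0 < a n) (K : ℕ) (hK : 1 ≤ K) (s : ℕ → ℝ)
    (hratio : ∀ᶠ n : ℕ in Filter.atTop,
      a n / a (n + 1) =
        1 + 1 / (n : ℝ)
          + (1 / (n : ℝ)) * ∑ i ∈ Finset.Icc 1 (K - 1),
              1 / ∏ k ∈ Finset.Icc 1 i, Real.log^[k] (n : ℝ)
          + s n / ((n : ℝ) * ∏ k ∈ Finset.Icc 1 K, Real.log^[k] (n : ℝ)))
    (hs : 1 < Filter.liminf (fun n => s n) Filter.atTop) :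
    Summable a := by
  have hev : ∃ c : ℝ, 1 < c ∧ ∀ᶠ n : ℕ in Filter.atTop, c ≤ s n := by
    rw [Filter.liminf_eq] at hs
    have hne : {x : ℝ | ∀ᶠ n in Filter.atTop, x ≤ s n}.Nonempty := by
      by_contra hne
      rw [Set.not_nonempty_iff_eq_empty.mp hne, Real.sSup_empty] at hs
      linarith
    obtain ⟨c, hc, h1c⟩ := exists_lt_of_lt_csSup hne hs
    exact ⟨c, h1c, hc⟩
  obtain ⟨c, hc1, hcs⟩ := hev
  set δ : ℝ := (c - 1)/2 with hδdef
  have hδ : 0 < δ := by rw [hδdef]; linarith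
  have hδ2 : c - 1 = 2*δ := by rw [hδdef]; ring
  set b : ℕ → ℝ := fun n => EBDM.g K (n:ℝ) * a n with hbdef
  have hkey : ∀ᶠ n : ℕ in Filter.atTop,
      δ * a (n+1) ≤ b n - b (n+1) ∧ 0 < EBDM.g K (n:ℝ) := by
    have hcast : Filter.Tendsto (fun n : ℕ => (n:ℝ)) Filter.atTop Filter.atTop :=
      tendsto_natCast_atTop_atTop
    filter_upwards [hratio, hcs, EBDM.key_diff hK hδ,
      hcast.eventually (EBDM.eventually_good K),
      hcast.eventually (Filter.eventually_ge_atTop (1:ℝ))] with n hr hsn hdiff hgood h1n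
    have hPne : EBDM.P K (n:ℝ) ≠ 0 := EBDM.P_ne_zero hgood
    have hnne : (n:ℝ) ≠ 0 := by linarith
    have hPdef : ∀ i : ℕ, (∏ k ∈ Finset.Icc 1 i, Real.log^[k] (n:ℝ)) = EBDM.P i (n:ℝ) :=
      fun i => rfl
    have hsumid : EBDM.P K (n:ℝ) * ∑ i ∈ Finset.Icc 1 (K-1), 1 / EBDM.P i (n:ℝ)
        = ∑ i ∈ Finset.Icc 1 (K-1), EBDM.P K (n:ℝ) / EBDM.P i (n:ℝ) := by
      rw [Finset.mul_sum]
      exact Finset.sum_congr rfl fun i _ => mul_one_div _ _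
    have expand : EBDM.g K (n:ℝ) * (a n / a (n+1))
        = EBDM.g K (n:ℝ) + (EBDM.h K (n:ℝ) - 1) + s n := by
      rw [hr]
      simp only [hPdef]
      rw [EBDM.hclosed hK hgood, ← hsumid]
      simp only [EBDM.g]
      field_simp
      ring
    have hstep : δ ≤ EBDM.g K (n:ℝ) * (a n / a (n+1)) - EBDM.g K ((n:ℝ)+1) := by
      rw [expand]
      linarith [hdiff, hsn]
    constructor
    · have h3 := mul_le_mul_of_nonneg_right hstep (ha (n+1)).le
      have h4 : (EBDM.g K (n:ℝ) * (a n / a (n+1)) - EBDM.g K ((n:ℝ)+1)) * a (n+1)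
          = b n - b (n+1) := by
        rw [sub_mul, mul_assoc, div_mul_cancel₀ _ (ha (n+1)).ne']
        simp only [hbdef]
        push_cast
        ring
      rw [← h4]
      exact h3
    · exact EBDM.g_pos hgood
  obtain ⟨N, hN⟩ := Filter.eventually_atTop.mp hkey
  have hbN : ∀ m, 0 ≤ b (N + m) := fun m =>
    (mul_pos (hN (N+m) (Nat.le_add_right _ _)).2 (ha _)).le
  have hsum_le : ∀ m : ℕ, ∑ i ∈ Finset.range m, a (N + 1 + i) ≤ b N / δ := by
    intro m
    rw [le_div_iff₀ hδ]
    have htel : ∑ i ∈ Finset.range m, (b (N+i) - b (N+i+1)) = b N - b (N+m) := by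
      have := Finset.sum_range_sub' (fun i => b (N+i)) m
      simpa [add_assoc] using this
    have h1 : ∑ i ∈ Finset.range m, δ * a (N+1+i)
        ≤ ∑ i ∈ Finset.range m, (b (N+i) - b (N+i+1)) := by
      apply Finset.sum_le_sum
      intro i _
      have h2 := (hN (N+i) (Nat.le_add_right _ _)).1
      have he1 : N + 1 + i = N + i + 1 := by omega
      rw [he1]
      exact h2
    rw [htel] at h1
    calc (∑ i ∈ Finset.range m, a (N+1+i)) * δ
        = ∑ i ∈ Finset.range m, δ * a (N+1+i) := by
          rw [Finset.sum_mul]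
          exact Finset.sum_congr rfl fun i _ => mul_comm _ _
      _ ≤ b N - b (N+m) := h1
      _ ≤ b N := by linarith [hbN m]
  have hsm : Summable (fun i => a (N+1+i)) :=
    summable_of_sum_range_le (fun i => (ha _).le) hsum_le
  have hsm2 : Summable (fun i => a (i + (N+1))) := by
    simpa [add_comm] using hsm
  exact (summable_nat_add_iff (N+1)).mp hsm2
end

section
/- (Kummer's test, convergence part.) Let (a_n) be a sequence of positive real numbers and let (ζ_n) be a sequence of positive real numbers defined for all n ≥ N for some N. Define ρ_n = ζ_n·(a_n/a_{n+1}) − ζ_{n+1}. If liminf_{n→∞} ρ_n > 0, then the series ∑_{n=1}^∞ a_n converges. -/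
/-- **Kummer's test, convergence part.** -/
theorem kummer_test_convergence
    (a : ℕ → ℝ) (ha : ∀ n, 0 < a n) (N : ℕ) (ζ : ℕ → ℝ) (hζ : ∀ n ≥ N, 0 < ζ n)
    (hρ : 0 < Filter.liminf
      (fun n => ζ n * (a n / a (n + 1)) - ζ (n + 1)) Filter.atTop) :
    Summable a := by
  rw [Filter.liminf_eq] at hρ
  have hS : {x | ∀ᶠ n in Filter.atTop,
      x ≤ ζ n * (a n / a (n + 1)) - ζ (n + 1)}.Nonempty := by
    by_contra h
    rw [Set.not_nonempty_iff_eq_empty] at h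
    rw [h, Real.sSup_empty] at hρ
    exact lt_irrefl _ hρ
  obtain ⟨c, hcS, hc⟩ := exists_lt_of_lt_csSup hS hρ
  obtain ⟨M0, hM0⟩ := Filter.eventually_atTop.mp hcS
  set M := max M0 N with hMdef
  have key : ∀ n, M ≤ n → c * a (n + 1) ≤ ζ n * a n - ζ (n + 1) * a (n + 1) := by
    intro n hn
    have h1 := hM0 n (le_trans (le_max_left _ _) hn)
    have ha1 := ha (n + 1)
    have h2 := mul_le_mul_of_nonneg_right h1 ha1.le
    calc c * a (n + 1) ≤ (ζ n * (a n / a (n + 1)) - ζ (n + 1)) * a (n + 1) := h2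
      _ = ζ n * a n - ζ (n + 1) * a (n + 1) := by field_simp
  have hsum : ∀ n, ∑ i ∈ Finset.range n, a (i + (M + 1)) ≤ ζ M * a M / c := by
    intro n
    have tele : ∑ i ∈ Finset.range n,
        (ζ (M + i) * a (M + i) - ζ (M + (i + 1)) * a (M + (i + 1)))
        = ζ M * a M - ζ (M + n) * a (M + n) := by
      have := Finset.sum_range_sub' (fun i => ζ (M + i) * a (M + i)) n
      simpa using this
    have h1 : c * ∑ i ∈ Finset.range n, a (i + (M + 1))
        ≤ ζ M * a M - ζ (M + n) * a (M + n) := by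
      rw [← tele, Finset.mul_sum]
      apply Finset.sum_le_sum
      intro i _
      have h := key (M + i) (Nat.le_add_right _ _)
      have e1 : i + (M + 1) = M + i + 1 := by omega
      have e2 : M + (i + 1) = M + i + 1 := by omega
      rw [e1, e2]
      exact h
    have hz : 0 ≤ ζ (M + n) * a (M + n) :=
      mul_nonneg (hζ _ (le_trans (le_max_right _ _) (Nat.le_add_right _ _))).le (ha _).le
    have h2 : c * ∑ i ∈ Finset.range n, a (i + (M + 1)) ≤ ζ M * a M := by linarith
    rw [le_div_iff₀ hc]
    linarith [h2]
  have htail : Summable (fun i => a (i + (M + 1))) :=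
    summable_of_sum_range_le (fun i => (ha _).le) hsum
  exact (summable_nat_add_iff (M + 1)).mp htail
end

section
/- (Kummer's test, divergence part.) Let (a_n) be a sequence of positive real numbers and let (ζ_n) be a sequence of positive real numbers defined for all n ≥ N for some N. Define ρ_n = ζ_n·(a_n/a_{n+1}) − ζ_{n+1}. If limsup_{n→∞} ρ_n < 0 and ∑_{n=N}^∞ 1/ζ_n = ∞, then the series ∑_{n=1}^∞ a_n diverges (is not summable). -/
/-- **Kummer's test, divergence part.** -/
theorem kummer_test_divergence
    (a : ℕ → ℝ) (ha : ∀ n, 0 < a n) (N : ℕ) (ζ : ℕ → ℝ) (hζ : ∀ n ≥ N, 0 < ζ n)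
    (hρ : Filter.limsup
      (fun n => ζ n * (a n / a (n + 1)) - ζ (n + 1)) Filter.atTop < 0)
    (hdiv : ¬ Summable (fun n : ℕ => 1 / ζ (N + n))) :
    ¬ Summable a := by
  intro hsum
  apply hdiv
  set ρ : ℕ → ℝ := fun n => ζ n * (a n / a (n + 1)) - ζ (n + 1) with hρdef
  have hev : ∀ᶠ n in Filter.atTop, ρ n < 0 := by
    rw [Filter.limsup_eq] at hρ
    set S := {b : ℝ | ∀ᶠ n in Filter.atTop, ρ n ≤ b} with hS
    have hne : S.Nonempty := by
      by_contra h
      rw [Set.not_nonempty_iff_eq_empty] at h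
      rw [h, Real.sInf_empty] at hρ; linarith
    have hbdd : BddBelow S := by
      by_contra h
      rw [Real.sInf_of_not_bddBelow h] at hρ; linarith
    obtain ⟨b, hbS, hb⟩ := (csInf_lt_iff hbdd hne).mp hρ
    exact hbS.mono fun n hn => lt_of_le_of_lt hn hb
  obtain ⟨M₀, hM⟩ := Filter.eventually_atTop.mp hev
  set M := max M₀ N with hMdef
  have hMN : N ≤ M := le_max_right _ _
  have step : ∀ k, M ≤ k → ζ k * a k < ζ (k + 1) * a (k + 1) := by
    intro k hk
    have hk0 : M₀ ≤ k := le_trans (le_max_left _ _) hk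
    have hρk : ρ k < 0 := hM k hk0
    have hlt : ζ k * (a k / a (k + 1)) < ζ (k + 1) := by
      have := sub_neg.mp hρk
      simpa [hρdef] using this
    have hak : (0 : ℝ) < a (k + 1) := ha _
    have := mul_lt_mul_of_pos_right hlt hak
    rwa [← mul_div_assoc, div_mul_cancel₀ _ (ne_of_gt hak)] at this
  have key : ∀ n, M ≤ n → ζ M * a M ≤ ζ n * a n := by
    intro n hn
    induction n with
    | zero => simp [Nat.le_zero.mp hn]
    | succ k ih =>
      rcases Nat.lt_or_ge k M with h | h
      · have : M = k + 1 := le_antisymm hn h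
        simp [this]
      · exact le_of_lt (lt_of_le_of_lt (ih h) (step k h))
  set c : ℝ := ζ M * a M with hcdef
  have hc : 0 < c := mul_pos (hζ M hMN) (ha M)
  have hbound : ∀ n, M ≤ n → 1 / ζ n ≤ a n / c := by
    intro n hn
    have hζn : 0 < ζ n := hζ n (le_trans hMN hn)
    rw [div_le_div_iff₀ hζn hc]
    have := key n hn
    nlinarith
  have hsum' : Summable (fun n : ℕ => a (n + (M + N)) / c) :=
    ((summable_nat_add_iff (M + N)).mpr hsum).div_const c
  apply (summable_nat_add_iff M).mp
  refine Summable.of_nonneg_of_le (fun n => ?_) (fun n => ?_) hsum'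
  · have : 0 < ζ (N + (n + M)) := hζ _ (by omega)
    positivity
  · have e : n + (M + N) = N + (n + M) := by omega
    rw [e]
    exact hbound _ (by omega)
end

section
/- For every integer k ≥ 1 and every integer i ≥ 1, for all sufficiently large x the i-th and (i+1)-st derivatives of f_k(x) = ln_{(k)} x have opposite signs: f_k^{(i)}(x)·f_k^{(i+1)}(x) < 0. -/
open Filter Finset

namespace IterLogAux

noncomputable def L (j : ℕ) : ℝ → ℝ := Real.log^[j]

noncomputable def Mon (k : ℕ) (a : ℕ → ℕ) (x : ℝ) : ℝ :=
  ∏ j ∈ Finset.range k, ((L j x)⁻¹) ^ (a j)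

noncomputable def evalT (k : ℕ) (T : List (ℝ × (ℕ → ℕ))) (x : ℝ) : ℝ :=
  (T.map (fun p => p.1 * Mon k p.2 x)).sum

def bump (j : ℕ) (a : ℕ → ℕ) : ℕ → ℕ := fun l => a l + (if l ≤ j then 1 else 0)

noncomputable def DT (k : ℕ) (T : List (ℝ × (ℕ → ℕ))) : List (ℝ × (ℕ → ℕ)) :=
  T.flatMap fun p => (List.range k).map fun j => (p.1 * (p.2 j : ℝ), bump j p.2)

noncomputable def E (k : ℕ) : ℝ := Real.exp^[k] 1

lemma one_le_E (k : ℕ) : 1 ≤ E k := by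
  induction k with
  | zero => simp [E]
  | succ n ih =>
    have h : E (n+1) = Real.exp (E n) := Function.iterate_succ_apply' _ _ _
    rw [h]
    calc (1:ℝ) ≤ E n := ih
    _ ≤ Real.exp (E n) := by linarith [Real.add_one_le_exp (E n)]

lemma L_gt (k : ℕ) : ∀ j ≤ k, ∀ x : ℝ, E k < x → E (k - j) < L j x := by
  intro j
  induction j with
  | zero => intro _ x hx; simpa [L] using hx
  | succ n ih =>
    intro hn x hx
    have hn' : n ≤ k := Nat.le_of_succ_le hn
    have h1 : E (k - n) < L n x := ih hn' x hx
    have hkn : k - n = (k - (n+1)) + 1 := by omega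
    have hE : E (k - n) = Real.exp (E (k - (n+1))) := by
      rw [hkn]; exact Function.iterate_succ_apply' _ _ _
    have hL : L (n+1) x = Real.log (L n x) := Function.iterate_succ_apply' _ _ _
    rw [hL]
    have := Real.log_lt_log (Real.exp_pos _) (hE ▸ h1)
    rwa [Real.log_exp] at this

lemma L_pos (k : ℕ) {j : ℕ} (hj : j ≤ k) {x : ℝ} (hx : E k < x) : 0 < L j x :=
  lt_trans (lt_of_lt_of_le one_pos (one_le_E _)) (L_gt k j hj x hx)

lemma hasDerivAt_L (k : ℕ) : ∀ j ≤ k, ∀ x : ℝ, E k < x →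
    HasDerivAt (L j) (∏ l ∈ Finset.range j, (L l x)⁻¹) x := by
  intro j
  induction j with
  | zero =>
    intro _ x _
    simpa [L] using (hasDerivAt_id x)
  | succ n ih =>
    intro hn x hx
    have hn' : n ≤ k := Nat.le_of_succ_le hn
    have h1 := ih hn' x hx
    have hpos : L n x ≠ 0 := ne_of_gt (L_pos k hn' hx)
    have h2 : HasDerivAt Real.log (L n x)⁻¹ (L n x) := Real.hasDerivAt_log hpos
    have hcomp := h2.comp x h1
    have hL : L (n+1) = Real.log ∘ L n := by
      funext y; exact Function.iterate_succ_apply' _ _ _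
    rw [hL]
    convert hcomp using 1
    · rfl
    · rfl
    rw [Finset.prod_range_succ]; ring

lemma Mon_eq_exp (k : ℕ) (a : ℕ → ℕ) {x : ℝ} (hx : E k < x) :
    Mon k a x = Real.exp (∑ j ∈ Finset.range k, -((a j : ℝ) * L (j+1) x)) := by
  rw [Real.exp_sum]
  refine Finset.prod_congr rfl fun j hj => ?_
  have hj' : j < k := Finset.mem_range.mp hj
  have hpos : 0 < L j x := L_pos k hj'.le hx
  have hLj : L (j+1) x = Real.log (L j x) := Function.iterate_succ_apply' _ _ _
  have hexp : Real.exp (L (j+1) x) = L j x := by rw [hLj, Real.exp_log hpos]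
  calc ((L j x)⁻¹) ^ (a j) = (Real.exp (-(L (j+1) x))) ^ (a j) := by
        rw [Real.exp_neg, hexp]
    _ = Real.exp ((a j : ℝ) * (-(L (j+1) x))) := by rw [Real.exp_nat_mul]
    _ = Real.exp (-((a j : ℝ) * L (j+1) x)) := by ring_nf

lemma Mon_bump (k : ℕ) (a : ℕ → ℕ) {j : ℕ} (hj : j < k) (x : ℝ) :
    Mon k (bump j a) x = Mon k a x * ∏ l ∈ Finset.range (j+1), (L l x)⁻¹ := by
  unfold Mon bump
  have hsplit : ∀ l ∈ Finset.range k,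
      ((L l x)⁻¹) ^ (a l + (if l ≤ j then 1 else 0))
        = ((L l x)⁻¹) ^ (a l) * ((L l x)⁻¹) ^ (if l ≤ j then 1 else 0) := by
    intro l _; rw [pow_add]
  rw [Finset.prod_congr rfl hsplit, Finset.prod_mul_distrib]
  congr 1
  have hsub : Finset.range (j+1) ⊆ Finset.range k := by
    intro l hl; simp only [Finset.mem_range] at *; omega
  have h1 : ∏ l ∈ Finset.range (j+1), (L l x)⁻¹
      = ∏ l ∈ Finset.range (j+1), ((L l x)⁻¹) ^ (if l ≤ j then 1 else 0) := by
    refine Finset.prod_congr rfl fun l hl => ?_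
    have : l ≤ j := by simp only [Finset.mem_range] at hl; omega
    rw [if_pos this, pow_one]
  rw [h1]
  exact (Finset.prod_subset hsub (fun l _ hl => by
    have : ¬ l ≤ j := by simp only [Finset.mem_range] at hl; omega
    rw [if_neg this, pow_zero])).symm

lemma hasDerivAt_Mon (k : ℕ) (a : ℕ → ℕ) {x : ℝ} (hx : E k < x) :
    HasDerivAt (Mon k a)
      (∑ j ∈ Finset.range k, -((a j : ℝ) * Mon k (bump j a) x)) x := by
  set S : ℝ → ℝ := fun y => ∑ j ∈ Finset.range k, -((a j : ℝ) * L (j+1) y) with hS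
  have hSd : HasDerivAt S
      (∑ j ∈ Finset.range k, -((a j : ℝ) * ∏ l ∈ Finset.range (j+1), (L l x)⁻¹)) x := by
    apply HasDerivAt.fun_sum
    intro j hj
    have hj' : j + 1 ≤ k := Finset.mem_range.mp hj
    exact ((hasDerivAt_L k (j+1) hj' x hx).const_mul ((a j : ℝ))).neg
  have hEd : HasDerivAt (fun y => Real.exp (S y))
      (Real.exp (S x) * (∑ j ∈ Finset.range k, -((a j : ℝ) * ∏ l ∈ Finset.range (j+1), (L l x)⁻¹))) x :=
    hSd.exp
  have heq : Mon k a =ᶠ[nhds x] fun y => Real.exp (S y) := by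
    filter_upwards [Ioi_mem_nhds hx] with y hy
    exact Mon_eq_exp k a hy
  have hder := hEd.congr_of_eventuallyEq heq
  convert hder using 1
  · rfl
  · rfl
  rw [← Mon_eq_exp k a hx, Finset.mul_sum]
  refine Finset.sum_congr rfl fun j hj => ?_
  rw [Mon_bump k a (Finset.mem_range.mp hj) x]
  ring

lemma sum_map_range (k : ℕ) (f : ℕ → ℝ) :
    ((List.range k).map f).sum = ∑ j ∈ Finset.range k, f j := by
  induction k with
  | zero => simp
  | succ n ih => rw [List.range_succ, List.map_append, List.sum_append,
      Finset.sum_range_succ, ih]; simp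

lemma hasDerivAt_evalT (k : ℕ) (T : List (ℝ × (ℕ → ℕ))) {x : ℝ} (hx : E k < x) :
    HasDerivAt (evalT k T) (-(evalT k (DT k T) x)) x := by
  induction T with
  | nil =>
    have : evalT k ([] : List (ℝ × (ℕ → ℕ))) = fun _ => 0 := by
      funext y; simp [evalT]
    rw [this]
    simpa [evalT, DT] using hasDerivAt_const x (0:ℝ)
  | cons p T ih =>
    have hsplit : evalT k (p :: T) = fun y => p.1 * Mon k p.2 y + evalT k T y := by
      funext y; simp [evalT]
    have hmon := (hasDerivAt_Mon k p.2 hx).const_mul p.1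
    have htot := hmon.add ih
    rw [hsplit]
    convert htot using 1
    · rfl
    · rfl
    · rfl
    have hDT : DT k (p :: T)
        = ((List.range k).map fun j => (p.1 * (p.2 j : ℝ), bump j p.2)) ++ DT k T := by
      simp [DT]
    rw [hDT]
    have hev : evalT k (((List.range k).map fun j => (p.1 * (p.2 j : ℝ), bump j p.2)) ++ DT k T) x
        = ((List.range k).map fun j => (p.1 * (p.2 j : ℝ)) * Mon k (bump j p.2) x).sum
          + evalT k (DT k T) x := by
      simp only [evalT, List.map_append, List.sum_append, List.map_map]
      rfl
    rw [hev, sum_map_range k (fun j => (p.1 * (p.2 j : ℝ)) * Mon k (bump j p.2) x),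
      Finset.mul_sum]
    rw [neg_add]
    congr 1
    rw [← Finset.sum_neg_distrib]
    refine Finset.sum_congr rfl fun j hj => by ring

lemma Mon_pos (k : ℕ) (a : ℕ → ℕ) {x : ℝ} (hx : E k < x) : 0 < Mon k a x := by
  apply Finset.prod_pos
  intro j hj
  exact pow_pos (inv_pos.mpr (L_pos k (Finset.mem_range.mp hj).le hx)) _

def PT (T : List (ℝ × (ℕ → ℕ))) : Prop :=
  (∀ p ∈ T, 0 ≤ p.1) ∧ ∃ p ∈ T, 0 < p.1 ∧ 1 ≤ p.2 0

lemma evalT_pos (k : ℕ) {T : List (ℝ × (ℕ → ℕ))} (hP : PT T) {x : ℝ} (hx : E k < x) :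
    0 < evalT k T x := by
  obtain ⟨hnn, p, hpT, hp1, _⟩ := hP
  have ht : 0 < p.1 * Mon k p.2 x := mul_pos hp1 (Mon_pos k p.2 hx)
  have hmem : p.1 * Mon k p.2 x ∈ T.map (fun q => q.1 * Mon k q.2 x) :=
    List.mem_map.mpr ⟨p, hpT, rfl⟩
  have hle := List.single_le_sum (l := T.map (fun q => q.1 * Mon k q.2 x))
    (fun r hr => by
      obtain ⟨q, hq, rfl⟩ := List.mem_map.mp hr
      exact mul_nonneg (hnn q hq) (Mon_pos k q.2 hx).le) _ hmem
  exact lt_of_lt_of_le ht hle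

lemma PT_DT (k : ℕ) (hk : 1 ≤ k) {T : List (ℝ × (ℕ → ℕ))} (hP : PT T) : PT (DT k T) := by
  obtain ⟨hnn, p, hpT, hp1, hp0⟩ := hP
  constructor
  · intro q hq
    obtain ⟨r, hrT, hq⟩ := List.mem_flatMap.mp hq
    obtain ⟨j, _, rfl⟩ := List.mem_map.mp hq
    exact mul_nonneg (hnn r hrT) (Nat.cast_nonneg _)
  · refine ⟨(p.1 * (p.2 0 : ℝ), bump 0 p.2), ?_, ?_, ?_⟩
    · apply List.mem_flatMap.mpr
      exact ⟨p, hpT, List.mem_map.mpr ⟨0, List.mem_range.mpr hk, rfl⟩⟩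
    · have : (1:ℝ) ≤ (p.2 0 : ℝ) := by exact_mod_cast hp0
      positivity
    · simp [bump]

lemma rep (k : ℕ) (hk : 1 ≤ k) : ∀ i, 1 ≤ i → ∃ T, PT T ∧
    ∀ x : ℝ, E k < x → iteratedDeriv i (L k) x = (-1:ℝ)^(i-1) * evalT k T x := by
  intro i hi
  induction i, hi using Nat.le_induction with
  | base =>
    refine ⟨[(1, fun _ => 1)], ⟨?_, ?_⟩, ?_⟩
    · intro p hp; simp at hp; rw [hp]; norm_num
    · exact ⟨(1, fun _ => 1), by simp, one_pos, le_refl 1⟩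
    · intro x hx
      have hd := hasDerivAt_L k k le_rfl x hx
      rw [iteratedDeriv_one, hd.deriv]
      simp [evalT, Mon]
  | succ i hi ih =>
    obtain ⟨T, hPT, hrep⟩ := ih
    refine ⟨DT k T, PT_DT k hk hPT, ?_⟩
    intro x hx
    rw [iteratedDeriv_succ]
    have h1 : HasDerivAt (fun y => (-1:ℝ)^(i-1) * evalT k T y)
        ((-1:ℝ)^(i-1) * (-(evalT k (DT k T) x))) x :=
      (hasDerivAt_evalT k T hx).const_mul _
    have h2 : iteratedDeriv i (L k) =ᶠ[nhds x] fun y => (-1:ℝ)^(i-1) * evalT k T y := by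
      filter_upwards [Ioi_mem_nhds hx] with y hy
      exact hrep y hy
    have h3 := h1.congr_of_eventuallyEq h2
    rw [h3.deriv]
    have hpow : ((-1:ℝ))^(i+1-1) = (-1)^(i-1) * (-1) := by
      have h4 : i+1-1 = (i-1)+1 := by omega
      rw [h4, pow_succ]
    rw [hpow]
    ring

end IterLogAux

/-- For `k ≥ 1` and `i ≥ 1`, for all sufficiently large `x` the `i`-th and
`(i+1)`-st derivatives of `f_k(x) = ln_{(k)} x` have opposite signs.
Here `Real.log^[k]` is the `k`-th iterate of `Real.log`. -/
theorem iterated_log_derivatives_alternate (k : ℕ) (hk : 1 ≤ k) (i : ℕ) (hi : 1 ≤ i) :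
    ∀ᶠ x : ℝ in Filter.atTop,
      iteratedDeriv i (fun y : ℝ => Real.log^[k] y) x *
        iteratedDeriv (i + 1) (fun y : ℝ => Real.log^[k] y) x < 0 := by
  obtain ⟨T1, hP1, hrep1⟩ := IterLogAux.rep k hk i hi
  obtain ⟨T2, hP2, hrep2⟩ := IterLogAux.rep k hk (i+1) (by omega)
  filter_upwards [Filter.eventually_gt_atTop (IterLogAux.E k)] with x hx
  have hf : (fun y : ℝ => Real.log^[k] y) = IterLogAux.L k := rfl
  rw [hf, hrep1 x hx, hrep2 x hx]
  have e1 := IterLogAux.evalT_pos k hP1 hx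
  have e2 := IterLogAux.evalT_pos k hP2 hx
  have hpow : ((-1:ℝ))^(i+1-1) = (-1)^(i-1) * (-1) := by
    have h4 : i+1-1 = (i-1)+1 := by omega
    rw [h4, pow_succ]
  rw [hpow]
  have hsq : ((-1:ℝ)^(i-1)) * ((-1:ℝ)^(i-1)) = 1 := by
    rw [← pow_add, ← two_mul, pow_mul]; norm_num
  set s := ((-1:ℝ))^(i-1) with hs
  set A := IterLogAux.evalT k T1 x
  set B := IterLogAux.evalT k T2 x
  have hring : s * A * (s * -1 * B) = -(s * s) * (A * B) := by ring
  rw [hring, hsq]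
  have := mul_pos e1 e2
  linarith
end

section
/- For every integer k ≥ 2, as x → ∞ one has the expansion ln_{(k)}(x+1) = ln_{(k)}(x) + 1/(x·∏_{j=1}^{k-1} ln_{(j)} x) + o(1/x²); that is, x²·(ln_{(k)}(x+1) − ln_{(k)}(x) − 1/(x·∏_{j=1}^{k-1} ln_{(j)} x)) → 0 as x → ∞. -/
open Real Filter Finset Set

noncomputable def tower : ℕ → ℝ
  | 0 => 1
  | n + 1 => Real.exp (tower n)

lemma tower_ge_one (n : ℕ) : 1 ≤ tower n := by
  induction n with
  | zero => simp [tower]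
  | succ n ih =>
    have := Real.add_one_le_exp (tower n)
    simp only [tower]; linarith

lemma tower_pos (n : ℕ) : 0 < tower n := lt_of_lt_of_le one_pos (tower_ge_one n)

lemma tower_mono : Monotone tower := by
  apply monotone_nat_of_le_succ
  intro n
  have := Real.add_one_le_exp (tower n)
  simp only [tower]; linarith

lemma log_tower_succ (n : ℕ) : Real.log (tower (n + 1)) = tower n := by
  simp [tower, Real.log_exp]

/-- Lower bound for iterated logs on the region `t ≥ tower n`. -/
lemma iter_log_ge (n : ℕ) : ∀ j ≤ n, ∀ t : ℝ, tower n ≤ t →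
    tower (n - j) ≤ Real.log^[j] t := by
  intro j
  induction j with
  | zero => intro _ t ht; simpa using ht
  | succ j ih =>
    intro hj t ht
    have hj' : j ≤ n := le_of_lt (Nat.lt_of_succ_le hj)
    have hIH : tower (n - j) ≤ Real.log^[j] t := ih hj' t ht
    have hnj' : n - j = (n - (j + 1)) + 1 := by omega
    rw [Function.iterate_succ_apply']
    calc tower (n - (j + 1)) = Real.log (tower (n - j)) := by
            rw [hnj', log_tower_succ]
      _ ≤ Real.log (Real.log^[j] t) := Real.log_le_log (tower_pos _) hIH

/-- Monotonicity of iterated logs on the region `t ≥ tower n`. -/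
lemma iter_log_mono (n : ℕ) : ∀ j ≤ n, ∀ s t : ℝ, tower n ≤ s → s ≤ t →
    Real.log^[j] s ≤ Real.log^[j] t := by
  intro j
  induction j with
  | zero => intro _ s t _ hst; simpa using hst
  | succ j ih =>
    intro hj s t hs hst
    have hj' : j ≤ n := le_of_lt (Nat.lt_of_succ_le hj)
    have h1 : tower (n - j) ≤ Real.log^[j] s := iter_log_ge n j hj' s hs
    have hpos : 0 < Real.log^[j] s := lt_of_lt_of_le (tower_pos _) h1
    rw [Function.iterate_succ_apply', Function.iterate_succ_apply']
    exact Real.log_le_log hpos (ih hj' s t hs hst)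

/-- Iterated logs are 1-Lipschitz (from above) on the region `t ≥ tower n`. -/
lemma iter_log_lipschitz (n : ℕ) : ∀ j ≤ n, ∀ s t : ℝ, tower n ≤ s → s ≤ t →
    Real.log^[j] t - Real.log^[j] s ≤ t - s := by
  intro j
  induction j with
  | zero => intro _ s t _ _; simp
  | succ j ih =>
    intro hj s t hs hst
    have hj' : j ≤ n := by omega
    have ha : tower (n - j) ≤ Real.log^[j] s := iter_log_ge n j hj' s hs
    have ha1 : (1 : ℝ) ≤ Real.log^[j] s := le_trans (tower_ge_one _) ha
    have hab : Real.log^[j] s ≤ Real.log^[j] t := iter_log_mono n j hj' s t hs hst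
    have hdiff := ih hj' s t hs hst
    rw [Function.iterate_succ_apply', Function.iterate_succ_apply']
    set a := Real.log^[j] s with hadef
    set b := Real.log^[j] t with hbdef
    have ha0 : 0 < a := by linarith
    have hb0 : 0 < b := by linarith
    have h1 : Real.log b - Real.log a = Real.log (b / a) :=
      (Real.log_div (ne_of_gt hb0) (ne_of_gt ha0)).symm
    have h2 : Real.log (b / a) ≤ b / a - 1 :=
      Real.log_le_sub_one_of_pos (by positivity)
    have h3 : b / a ≤ b - a + 1 := by
      rw [div_le_iff₀ ha0]
      nlinarith [mul_nonneg (by linarith : (0:ℝ) ≤ a - 1) (by linarith : (0:ℝ) ≤ b - a)]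
    linarith

/-- Iterated logs (j ≥ 1) contract differences below `log t - log s`. -/
lemma iter_log_diff_le (n : ℕ) (hn : 1 ≤ n) : ∀ j, 1 ≤ j → j ≤ n →
    ∀ s t : ℝ, tower n ≤ s → s ≤ t →
    Real.log^[j] t - Real.log^[j] s ≤ Real.log t - Real.log s := by
  intro j hj1 hjn s t hs hst
  obtain ⟨i, rfl⟩ : ∃ i, j = i + 1 := ⟨j - 1, by omega⟩
  rw [Function.iterate_succ_apply, Function.iterate_succ_apply]
  have hls : tower (n - 1) ≤ Real.log s := by
    have := iter_log_ge n 1 hn s hs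
    simpa using this
  have hs0 : 0 < s := lt_of_lt_of_le (tower_pos n) hs
  have hlst : Real.log s ≤ Real.log t := Real.log_le_log hs0 hst
  exact iter_log_lipschitz (n - 1) i (by omega) _ _ hls hlst

lemma one_le_prod_real {s : Finset ℕ} {f : ℕ → ℝ} (h : ∀ i ∈ s, 1 ≤ f i) :
    1 ≤ ∏ i ∈ s, f i := by
  calc (1:ℝ) = ∏ _i ∈ s, (1:ℝ) := by simp
    _ ≤ ∏ i ∈ s, f i := Finset.prod_le_prod (by simp) h

/-- Difference bound for the product of iterated logs. -/
lemma prod_diff_bound (n : ℕ) (hn : 1 ≤ n) : ∀ m ≤ n, ∀ s t : ℝ, tower n ≤ s → s ≤ t →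
    (∏ j ∈ Finset.Icc 1 m, Real.log^[j] t) - (∏ j ∈ Finset.Icc 1 m, Real.log^[j] s)
      ≤ (m : ℝ) * (Real.log t - Real.log s) * ∏ j ∈ Finset.Icc 1 m, Real.log^[j] t := by
  intro m
  induction m with
  | zero => intro _ s t _ _; simp
  | succ m ih =>
    intro hm s t hs hst
    have hm' : m ≤ n := by omega
    have hIH := ih hm' s t hs hst
    rw [Finset.prod_Icc_succ_top (by omega : 1 ≤ m + 1),
        Finset.prod_Icc_succ_top (by omega : 1 ≤ m + 1)]
    set A := ∏ j ∈ Finset.Icc 1 m, Real.log^[j] s with hA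
    set B := ∏ j ∈ Finset.Icc 1 m, Real.log^[j] t with hB
    set a := Real.log^[m + 1] s with ha
    set b := Real.log^[m + 1] t with hb
    have hfacs : ∀ i ∈ Finset.Icc 1 m, (1 : ℝ) ≤ Real.log^[i] s := by
      intro i hi
      rw [Finset.mem_Icc] at hi
      exact le_trans (tower_ge_one _) (iter_log_ge n i (by omega) s hs)
    have hA1 : (1 : ℝ) ≤ A := one_le_prod_real hfacs
    have hAB : A ≤ B := by
      apply Finset.prod_le_prod
      · intro i hi; exact le_trans zero_le_one (hfacs i hi)
      · intro i hi
        rw [Finset.mem_Icc] at hi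
        exact iter_log_mono n i (by omega) s t hs hst
    have ha1 : (1 : ℝ) ≤ a :=
      le_trans (tower_ge_one _) (iter_log_ge n (m + 1) hm s hs)
    have hab : a ≤ b := iter_log_mono n (m + 1) hm s t hs hst
    have hd1 : b - a ≤ Real.log t - Real.log s :=
      iter_log_diff_le n hn (m + 1) (by omega) hm s t hs hst
    have hs0 : 0 < s := lt_of_lt_of_le (tower_pos n) hs
    have hL : 0 ≤ Real.log t - Real.log s := by
      have := Real.log_le_log hs0 hst; linarith
    set L := Real.log t - Real.log s with hLdef
    have hB0 : (0:ℝ) ≤ B := by linarith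
    have hb0 : (0:ℝ) ≤ b := by linarith
    push_cast
    nlinarith [mul_le_mul_of_nonneg_right hIH hb0,
      mul_le_mul_of_nonneg_left hd1 (by linarith : (0:ℝ) ≤ A),
      mul_le_mul_of_nonneg_right hAB hL,
      mul_nonneg (mul_nonneg hB0 hL) (by linarith : (0:ℝ) ≤ b - 1)]

/-- Derivative of the `(m+1)`-st iterated log. -/
lemma hasDerivAt_iter_log (m : ℕ) : ∀ t : ℝ, tower m ≤ t →
    HasDerivAt (Real.log^[m + 1])
      (t * ∏ j ∈ Finset.Icc 1 m, Real.log^[j] t)⁻¹ t := by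
  induction m with
  | zero =>
    intro t ht
    have ht1 : (1 : ℝ) ≤ t := le_trans (tower_ge_one 0) ht
    have := Real.hasDerivAt_log (by linarith : t ≠ 0)
    simpa using this
  | succ m ih =>
    intro t ht
    have ht' : tower m ≤ t := le_trans (tower_mono (Nat.le_succ m)) ht
    have hIH := ih t ht'
    have hpos : 0 < Real.log^[m + 1] t := by
      have := iter_log_ge (m + 1) (m + 1) le_rfl t ht
      simp only [Nat.sub_self] at this
      exact lt_of_lt_of_le (tower_pos 0) this
    have hlog := Real.hasDerivAt_log (ne_of_gt hpos)
    have hcomp := hlog.comp t hIH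
    rw [show Real.log^[m + 1 + 1] = Real.log ∘ Real.log^[m + 1] from
      Function.iterate_succ' Real.log (m + 1)]
    refine hcomp.congr_deriv ?_
    rw [Finset.prod_Icc_succ_top (by omega : 1 ≤ m + 1)]
    have h1 : Real.log^[m + 1] t ≠ 0 := ne_of_gt hpos
    field_simp

/-- For `k ≥ 2`, as `x → ∞`,
`ln_{(k)}(x+1) = ln_{(k)}(x) + 1/(x · ∏_{j=1}^{k-1} ln_{(j)} x) + o(1/x²)`.
Here `Real.log^[k]` is the `k`-th iterate of `Real.log`. -/
theorem iterated_log_expansion (k : ℕ) (hk : 2 ≤ k) :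
    Filter.Tendsto
      (fun x : ℝ => x ^ 2 *
        (Real.log^[k] (x + 1) - Real.log^[k] x -
          1 / (x * ∏ j ∈ Finset.Icc 1 (k - 1), Real.log^[j] x)))
      Filter.atTop (nhds 0) := by
  obtain ⟨m, rfl⟩ : ∃ m, k = m + 1 := ⟨k - 1, by omega⟩
  have hm : 1 ≤ m := by omega
  simp only [Nat.add_sub_cancel]
  set T : ℝ := tower (m + 1) with hT
  set P : ℝ → ℝ := fun t => ∏ j ∈ Finset.Icc 1 m, Real.log^[j] t with hP
  set d : ℝ → ℝ := fun t => (t * P t)⁻¹ with hd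
  have hfac : ∀ t : ℝ, T ≤ t → ∀ j ∈ Finset.Icc 1 m, (1 : ℝ) ≤ Real.log^[j] t := by
    intro t ht j hj
    rw [Finset.mem_Icc] at hj
    have := iter_log_ge (m + 1) j (by omega) t ht
    exact le_trans (tower_ge_one _) this
  have hPone : ∀ t : ℝ, T ≤ t → (1 : ℝ) ≤ P t := by
    intro t ht
    simp only [hP]
    exact one_le_prod_real (hfac t ht)
  have hPlog : ∀ t : ℝ, T ≤ t → Real.log t ≤ P t := by
    intro t ht
    have h1 : (1 : ℕ) ∈ Finset.Icc 1 m := Finset.mem_Icc.mpr ⟨le_rfl, hm⟩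
    have h2 : (1:ℝ) ≤ ∏ i ∈ (Finset.Icc 1 m).erase 1, Real.log^[i] t :=
      one_le_prod_real (fun i hi => hfac t ht i (Finset.mem_of_mem_erase hi))
    have h3 : (∏ i ∈ (Finset.Icc 1 m).erase 1, Real.log^[i] t) * Real.log^[1] t
        = ∏ i ∈ Finset.Icc 1 m, Real.log^[i] t :=
      Finset.prod_erase_mul _ _ h1
    have h4 : Real.log^[1] t = Real.log t := Function.iterate_one Real.log ▸ rfl
    have h5 : (0:ℝ) ≤ Real.log t := by
      have := hfac t ht 1 h1
      rw [h4] at this; linarith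
    simp only [hP]
    rw [← h3, h4]
    nlinarith
  have hlogT : ∀ t : ℝ, T ≤ t → (1 : ℝ) ≤ Real.log t := by
    intro t ht
    have := iter_log_ge (m + 1) 1 (by omega) t ht
    simpa using le_trans (tower_ge_one _) this
  have hT1 : (1 : ℝ) ≤ T := tower_ge_one _
  have hPmono : ∀ s t : ℝ, T ≤ s → s ≤ t → P s ≤ P t := by
    intro s t hs hst
    apply Finset.prod_le_prod
    · intro i hi; exact le_trans zero_le_one (hfac s hs i hi)
    · intro i hi
      rw [Finset.mem_Icc] at hi
      exact iter_log_mono (m + 1) i (by omega) s t hs hst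
  have hdmono : ∀ s t : ℝ, T ≤ s → s ≤ t → d t ≤ d s := by
    intro s t hs hst
    have hs1 : (1 : ℝ) ≤ s := le_trans hT1 hs
    have hspos : 0 < s * P s := by
      have := hPone s hs; nlinarith
    apply inv_anti₀ hspos
    have := hPmono s t hs hst
    have := hPone s hs
    nlinarith
  apply squeeze_zero_norm' (a := fun x => ((m : ℝ) + 1) * (Real.log x)⁻¹)
  · filter_upwards [eventually_ge_atTop T] with x hx
    have hx1 : (1 : ℝ) ≤ x := le_trans hT1 hx
    have hx0 : 0 < x := by linarith
    have hder : ∀ t ∈ Set.Icc x (x + 1), HasDerivAt (Real.log^[m + 1]) (d t) t := by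
      intro t ht
      have : tower m ≤ t :=
        le_trans (tower_mono (Nat.le_succ m)) (le_trans hx ht.1)
      exact hasDerivAt_iter_log m t this
    have hcont : ContinuousOn (Real.log^[m + 1]) (Set.Icc x (x + 1)) :=
      fun t ht => (hder t ht).continuousAt.continuousWithinAt
    obtain ⟨ξ, hξ, hslope⟩ := exists_hasDerivAt_eq_slope (Real.log^[m + 1]) d
      (by linarith : x < x + 1) hcont
      (fun t ht => hder t ⟨le_of_lt ht.1, le_of_lt ht.2⟩)
    have hDiff : Real.log^[m + 1] (x + 1) - Real.log^[m + 1] x = d ξ := by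
      rw [hslope]; ring_nf
    have hone : 1 / (x * P x) = d x := by simp [hd, one_div]
    have hξ1 : x ≤ ξ := le_of_lt hξ.1
    have hξ2 : ξ ≤ x + 1 := le_of_lt hξ.2
    have hdle : d ξ ≤ d x := hdmono x ξ hx hξ1
    have hdge : d (x + 1) ≤ d ξ := hdmono ξ (x + 1) (le_trans hx hξ1) hξ2
    have hPx : (1 : ℝ) ≤ P x := hPone x hx
    have hPxpos : (0:ℝ) < P x := by linarith
    have hPx1 : P x ≤ P (x + 1) := hPmono x (x + 1) hx (by linarith)
    have hBpos : (0:ℝ) < P (x + 1) := by linarith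
    have hlogx : (1:ℝ) ≤ Real.log x := hlogT x hx
    -- log difference bound
    have hlog1 : Real.log (x + 1) - Real.log x ≤ 1 / x := by
      have h0 : Real.log ((x + 1) / x) ≤ (x + 1) / x - 1 :=
        Real.log_le_sub_one_of_pos (by positivity)
      rw [Real.log_div (by linarith) (ne_of_gt hx0)] at h0
      have : (x + 1) / x - 1 = 1 / x := by field_simp; ring
      linarith
    have hlip : P (x + 1) - P x ≤ (m : ℝ) * (Real.log (x + 1) - Real.log x) * P (x + 1) := by
      simp only [hP]
      exact prod_diff_bound (m + 1) (by omega) m (by omega) x (x + 1) hx (by linarith)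
    have hBA : x * (P (x + 1) - P x) ≤ (m : ℝ) * P (x + 1) := by
      have h1 : (m : ℝ) * (Real.log (x + 1) - Real.log x) * P (x + 1)
          ≤ (m : ℝ) * (1 / x) * P (x + 1) := by
        apply mul_le_mul_of_nonneg_right _ (le_of_lt hBpos)
        exact mul_le_mul_of_nonneg_left hlog1 (Nat.cast_nonneg m)
      have h2 : x * ((m : ℝ) * (1 / x) * P (x + 1)) = (m : ℝ) * P (x + 1) := by
        field_simp
      calc x * (P (x + 1) - P x) ≤ x * ((m : ℝ) * (1 / x) * P (x + 1)) :=
            mul_le_mul_of_nonneg_left (le_trans hlip h1) (le_of_lt hx0)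
        _ = (m : ℝ) * P (x + 1) := h2
    have hnum : (x + 1) * P (x + 1) - x * P x ≤ ((m : ℝ) + 1) * P (x + 1) := by
      nlinarith [hBA]
    have hden1 : (0:ℝ) < x * P x := mul_pos hx0 hPxpos
    have hden2 : (0:ℝ) < (x + 1) * P (x + 1) := mul_pos (by linarith) hBpos
    have h7 : d x - d (x + 1) ≤ ((m : ℝ) + 1) / (x * P x * (x + 1)) := by
      have e1 : d x - d (x + 1)
          = ((x + 1) * P (x + 1) - x * P x) / (x * P x * ((x + 1) * P (x + 1))) := by
        simp only [hd]
        field_simp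
      rw [e1]
      have e2 : ((x + 1) * P (x + 1) - x * P x) / (x * P x * ((x + 1) * P (x + 1)))
          ≤ (((m : ℝ) + 1) * P (x + 1)) / (x * P x * ((x + 1) * P (x + 1))) :=
        (div_le_div_iff_of_pos_right (by positivity)).mpr hnum
      have e3 : (((m : ℝ) + 1) * P (x + 1)) / (x * P x * ((x + 1) * P (x + 1)))
          = ((m : ℝ) + 1) / (x * P x * (x + 1)) := by
        field_simp
      rw [e3] at e2
      exact e2
    have h8 : d x - d ξ ≤ ((m : ℝ) + 1) / (x * P x * (x + 1)) :=
      le_trans (by linarith) h7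
    have h9 : x ^ 2 * (d x - d ξ) ≤ ((m : ℝ) + 1) * (Real.log x)⁻¹ := by
      have hA : (P x)⁻¹ ≤ (Real.log x)⁻¹ :=
        inv_anti₀ (by linarith) (hPlog x hx)
      have c1 : x ^ 2 * (d x - d ξ) ≤ x ^ 2 * (((m : ℝ) + 1) / (x * P x * (x + 1))) :=
        mul_le_mul_of_nonneg_left h8 (by positivity)
      have c2 : x ^ 2 * (((m : ℝ) + 1) / (x * P x * (x + 1)))
          = ((m : ℝ) + 1) * (x / (x + 1)) * (P x)⁻¹ := by
        field_simp
      have c3 : x / (x + 1) ≤ 1 := by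
        rw [div_le_one (by linarith)]; linarith
      have c4 : ((m : ℝ) + 1) * (x / (x + 1)) * (P x)⁻¹ ≤ ((m : ℝ) + 1) * 1 * (P x)⁻¹ := by
        apply mul_le_mul_of_nonneg_right
          (mul_le_mul_of_nonneg_left c3 (by positivity)) (by positivity)
      have c5 : ((m : ℝ) + 1) * 1 * (P x)⁻¹ ≤ ((m : ℝ) + 1) * (Real.log x)⁻¹ := by
        rw [mul_one]
        exact mul_le_mul_of_nonneg_left hA (by positivity)
      linarith
    rw [hDiff, hone]
    have hle : x ^ 2 * (d ξ - d x) ≤ 0 := by nlinarith [sq_nonneg x]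
    rw [Real.norm_eq_abs, abs_of_nonpos hle]
    calc -(x ^ 2 * (d ξ - d x)) = x ^ 2 * (d x - d ξ) := by ring
      _ ≤ ((m : ℝ) + 1) * (Real.log x)⁻¹ := h9
  · simpa using
      ((tendsto_inv_atTop_zero.comp Real.tendsto_log_atTop).const_mul ((m : ℝ) + 1))
end

section
/- Let (a_n) be a sequence of positive real numbers and K ≥ 1 an integer, and suppose there is a sequence (s_n) of real numbers such that for all sufficiently large n, a_n/a_{n+1} = 1 + 1/n + (1/n)·∑_{i=1}^{K-1} 1/(∏_{k=1}^{i} ln_{(k)} n) + s_n/(n·∏_{k=1}^{K} ln_{(k)} n), and suppose (s_n) is bounded. Then with ζ_n = n·∏_{k=1}^{K} ln_{(k)} n, the Kummer quantity ρ_n = ζ_n·(a_n/a_{n+1}) − ζ_{n+1} satisfies ρ_n = s_n − 1 + o(1), i.e. ρ_n − s_n + 1 → 0 as n → ∞. -/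
open Finset Filter Real Set Topology

noncomputable def eeX (m : ℕ) : ℝ := Real.exp^[m] 1

noncomputable def PPX (m : ℕ) (x : ℝ) : ℝ := ∏ k ∈ Finset.Icc 1 m, Real.log^[k] x



lemma eeX_succ (m : ℕ) : eeX (m+1) = Real.exp (eeX m) := by
  simp [eeX, Function.iterate_succ_apply']

lemma one_le_eeX (m : ℕ) : 1 ≤ eeX m := by
  induction m with
  | zero => simp [eeX]
  | succ m ih => rw [eeX_succ]; linarith [Real.add_one_le_exp (eeX m)]

lemma eeX_mono : Monotone eeX := by
  apply monotone_nat_of_le_succ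
  intro m
  rw [eeX_succ]
  linarith [Real.add_one_le_exp (eeX m)]

lemma one_le_logI (m : ℕ) : ∀ x : ℝ, eeX m ≤ x → 1 ≤ Real.log^[m] x := by
  induction m with
  | zero => intro x hx; simpa [eeX] using hx
  | succ m ih =>
    intro x hx
    rw [Function.iterate_succ_apply]
    apply ih
    rw [eeX_succ] at hx
    calc eeX m = Real.log (Real.exp (eeX m)) := (Real.log_exp _).symm
    _ ≤ Real.log x := Real.log_le_log (Real.exp_pos _) hx

lemma logI_mono (m : ℕ) : ∀ x y : ℝ, eeX m ≤ x → x ≤ y → Real.log^[m] x ≤ Real.log^[m] y := by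
  induction m with
  | zero => intro x y _ h; simpa using h
  | succ m ih =>
    intro x y hx hxy
    rw [Function.iterate_succ_apply, Function.iterate_succ_apply]
    have hex : Real.exp (eeX m) ≤ x := by rw [eeX_succ] at hx; exact hx
    have h1 : eeX m ≤ Real.log x := by
      calc eeX m = Real.log (Real.exp (eeX m)) := (Real.log_exp _).symm
      _ ≤ Real.log x := Real.log_le_log (Real.exp_pos _) hex
    exact ih _ _ h1 (Real.log_le_log (lt_of_lt_of_le (Real.exp_pos _) hex) hxy)

lemma logI_le_log (m : ℕ) : ∀ x : ℝ, eeX (m+1) ≤ x → Real.log^[m+1] x ≤ Real.log x := by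
  induction m with
  | zero => intro x hx; simp
  | succ m ih =>
    intro x hx
    have hx' : eeX (m+1) ≤ x := le_trans (eeX_mono (Nat.le_succ _)) hx
    have h1 : 1 ≤ Real.log^[m+1] x := one_le_logI _ _ hx'
    calc Real.log^[m+2] x = Real.log (Real.log^[m+1] x) := by
          rw [Function.iterate_succ_apply']
    _ ≤ Real.log^[m+1] x := Real.log_le_self (by linarith)
    _ ≤ Real.log x := ih x hx'


lemma PPX_succ (m : ℕ) (x : ℝ) : PPX (m+1) x = PPX m x * Real.log^[m+1] x := by
  rw [PPX, PPX, Finset.prod_Icc_succ_top (Nat.le_add_left 1 m)]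

lemma one_le_PPX (m : ℕ) {x : ℝ} (hx : eeX m ≤ x) : 1 ≤ PPX m x := by
  rw [PPX]
  have := Finset.prod_le_prod (s := Finset.Icc 1 m) (f := fun _ => (1:ℝ))
    (g := fun k => Real.log^[k] x) (fun k _ => zero_le_one)
    (fun k hk => one_le_logI k x (le_trans (eeX_mono (Finset.mem_Icc.mp hk).2) hx))
  simpa using this

lemma PPX_pos (m : ℕ) {x : ℝ} (hx : eeX m ≤ x) : 0 < PPX m x :=
  lt_of_lt_of_le one_pos (one_le_PPX m hx)

lemma PPX_mono (m : ℕ) {x y : ℝ} (hx : eeX m ≤ x) (hxy : x ≤ y) : PPX m x ≤ PPX m y := by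
  apply Finset.prod_le_prod
  · intro k hk
    exact le_trans zero_le_one (one_le_logI k x (le_trans (eeX_mono (Finset.mem_Icc.mp hk).2) hx))
  · intro k hk
    exact logI_mono k x y (le_trans (eeX_mono (Finset.mem_Icc.mp hk).2) hx) hxy

lemma PPX_le_pow_log (m : ℕ) {x : ℝ} (hx : eeX m ≤ x) : PPX m x ≤ (Real.log x) ^ m := by
  have : PPX m x ≤ ∏ k ∈ Finset.Icc 1 m, Real.log x := by
    apply Finset.prod_le_prod
    · intro k hk
      exact le_trans zero_le_one (one_le_logI k x (le_trans (eeX_mono (Finset.mem_Icc.mp hk).2) hx))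
    · intro k hk
      obtain ⟨hk1, hk2⟩ := Finset.mem_Icc.mp hk
      obtain ⟨j, rfl⟩ := Nat.exists_eq_add_of_le hk1
      rw [add_comm]
      exact logI_le_log j x (le_trans (eeX_mono (by omega : j + 1 ≤ m)) hx)
  simpa [Nat.card_Icc] using this

-- ratio of products
lemma PPX_div (m k : ℕ) (hk : k ≤ m) {x : ℝ} (hx : eeX m ≤ x) :
    PPX m x / PPX k x = ∏ j ∈ Finset.Ioc k m, Real.log^[j] x := by
  have hIoc : ∀ p : ℕ, PPX p x = ∏ j ∈ Finset.Ioc 0 p, Real.log^[j] x := by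
    intro p
    rw [PPX, ← Finset.Icc_add_one_left_eq_Ioc, zero_add]
  have hsplit : PPX k x * ∏ j ∈ Finset.Ioc k m, Real.log^[j] x = PPX m x := by
    rw [hIoc, hIoc]
    exact Finset.prod_Ioc_consecutive _ (Nat.zero_le k) hk
  rw [← hsplit]
  have h0 : PPX k x ≠ 0 := ne_of_gt (PPX_pos k (le_trans (eeX_mono hk) hx))
  field_simp

lemma PPX_div_mono (m k : ℕ) (hk : k ≤ m) {x y : ℝ} (hx : eeX m ≤ x) (hxy : x ≤ y) :
    PPX m x / PPX k x ≤ PPX m y / PPX k y := by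
  rw [PPX_div m k hk hx, PPX_div m k hk (le_trans hx hxy)]
  apply Finset.prod_le_prod
  · intro j hj
    exact le_trans zero_le_one (one_le_logI j x (le_trans (eeX_mono (Finset.mem_Ioc.mp hj).2) hx))
  · intro j hj
    exact logI_mono j x y (le_trans (eeX_mono (Finset.mem_Ioc.mp hj).2) hx) hxy


lemma one_lt_of_ee {m : ℕ} {x : ℝ} (hx : eeX m ≤ x) : (1:ℝ) ≤ x := le_trans (one_le_eeX m) hx
lemma pos_of_ee {m : ℕ} {x : ℝ} (hx : eeX m ≤ x) : (0:ℝ) < x := lt_of_lt_of_le one_pos (one_lt_of_ee hx)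

lemma hasDerivAt_logI (m : ℕ) : ∀ x : ℝ, eeX (m+1) ≤ x →
    HasDerivAt (Real.log^[m+1]) ((x * PPX m x)⁻¹) x := by
  induction m with
  | zero =>
    intro x hx
    have hx0 : x ≠ 0 := ne_of_gt (pos_of_ee hx)
    have : PPX 0 x = 1 := by simp [PPX]
    simpa [this] using Real.hasDerivAt_log hx0
  | succ m ih =>
    intro x hx
    have hx' : eeX (m+1) ≤ x := le_trans (eeX_mono (Nat.le_succ _)) hx
    have h1 : 1 ≤ Real.log^[m+1] x := one_le_logI _ _ hx'
    have hne : Real.log^[m+1] x ≠ 0 := by linarith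
    have hcomp := (Real.hasDerivAt_log hne).comp x (ih x hx')
    rw [← Function.iterate_succ'] at hcomp
    refine hcomp.congr_deriv ?_
    rw [PPX_succ]
    have hP : PPX m x ≠ 0 := ne_of_gt (PPX_pos m (le_trans (eeX_mono (by omega)) hx))
    have hx0 : x ≠ 0 := ne_of_gt (pos_of_ee hx)
    field_simp

lemma hasDerivAt_PPX (m : ℕ) : ∀ x : ℝ, eeX m ≤ x →
    HasDerivAt (fun y => PPX m y) (∑ k ∈ Finset.Icc 1 m, PPX m x / (x * PPX k x)) x := by
  induction m with
  | zero =>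
    intro x hx
    have h1 : (fun y => PPX 0 y) = fun _ => (1:ℝ) := by funext y; simp [PPX]
    rw [h1]
    simpa using hasDerivAt_const x (1:ℝ)
  | succ m ih =>
    intro x hx
    have hx' : eeX m ≤ x := le_trans (eeX_mono (Nat.le_succ _)) hx
    have hP : ∀ k, k ≤ m + 1 → (0:ℝ) < PPX k x := fun k hk => PPX_pos k (le_trans (eeX_mono hk) hx)
    have hx0 : (0:ℝ) < x := pos_of_ee hx
    have heq : (fun y => PPX (m+1) y) = fun y => PPX m y * Real.log^[m+1] y := by
      funext y; rw [PPX_succ]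
    rw [heq]
    have hmul := (ih x hx').mul (hasDerivAt_logI m x hx)
    refine hmul.congr_deriv ?_
    rw [Finset.sum_Icc_succ_top (Nat.le_add_left 1 m), Finset.sum_mul]
    congr 1
    · apply Finset.sum_congr rfl
      intro k hk
      have hPk := hP k (le_trans (Finset.mem_Icc.mp hk).2 (Nat.le_succ m))
      rw [PPX_succ]
      field_simp
    · have hPm := hP m (Nat.le_succ m)
      have hP1 : PPX (m+1) x ≠ 0 := ne_of_gt (hP _ le_rfl)
      have key : ∀ a : ℝ, a ≠ 0 → a / (x * a) = x⁻¹ := by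
        intro a ha
        rw [div_eq_iff (mul_ne_zero (ne_of_gt hx0) ha), ← mul_assoc,
          inv_mul_cancel₀ (ne_of_gt hx0), one_mul]
      rw [key _ hP1, ← div_eq_mul_inv, key _ (ne_of_gt hPm)]

lemma hasDerivAt_f (m : ℕ) (x : ℝ) (hx : eeX m ≤ x) :
    HasDerivAt (fun y => y * PPX m y)
      (PPX m x + ∑ k ∈ Finset.Icc 1 m, PPX m x / PPX k x) x := by
  have h := (hasDerivAt_id x).mul (hasDerivAt_PPX m x hx)
  refine h.congr_deriv ?_
  have hx0 : x ≠ 0 := ne_of_gt (pos_of_ee hx)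
  simp only [id_eq, one_mul]
  rw [Finset.mul_sum]
  congr 1
  apply Finset.sum_congr rfl
  intro k hk
  have hPk : PPX k x ≠ 0 := ne_of_gt (PPX_pos k (le_trans (eeX_mono (Finset.mem_Icc.mp hk).2) hx))
  field_simp


lemma DeltaP_tendsto (K : ℕ) :
    Tendsto (fun n : ℕ => PPX K ((n:ℝ)+1) - PPX K (n:ℝ)) atTop (𝓝 0) := by
  have hev : ∀ᶠ n : ℕ in atTop, eeX K ≤ (n:ℝ) :=
    tendsto_natCast_atTop_atTop.eventually_ge_atTop (eeX K)
  apply squeeze_zero' (g := fun n : ℕ => (K:ℝ) * (Real.log ((n:ℝ)+1) ^ K / (1 * ((n:ℝ)+1) + (-1))))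
  · filter_upwards [hev] with n hn
    have : PPX K (n:ℝ) ≤ PPX K ((n:ℝ)+1) := PPX_mono K hn (by linarith)
    linarith
  · filter_upwards [hev] with n hn
    have hn1 : (1:ℝ) ≤ (n:ℝ) := le_trans (one_le_eeX K) hn
    have hlt : (n:ℝ) < (n:ℝ) + 1 := by linarith
    obtain ⟨c, hc, hceq⟩ := exists_hasDerivAt_eq_slope (fun y => PPX K y)
      (fun y => ∑ k ∈ Finset.Icc 1 K, PPX K y / (y * PPX k y)) hlt
      (fun x hx => (hasDerivAt_PPX K x (le_trans hn hx.1)).continuousAt.continuousWithinAt)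
      (fun x hx => hasDerivAt_PPX K x (le_trans hn (le_of_lt hx.1)))
    rw [add_sub_cancel_left, div_one] at hceq
    rw [← hceq]
    have hcn : (n:ℝ) ≤ c := le_of_lt hc.1
    have hcn1 : c ≤ (n:ℝ) + 1 := le_of_lt hc.2
    have hEc : eeX K ≤ c := le_trans hn hcn
    have hc0 : (0:ℝ) < c := by linarith
    have hterm : ∀ k ∈ Finset.Icc 1 K, PPX K c / (c * PPX k c) ≤
        Real.log ((n:ℝ)+1) ^ K / (1 * ((n:ℝ)+1) + (-1)) := by
      intro k hk
      have hPk : 1 ≤ PPX k c := one_le_PPX k (le_trans (eeX_mono (Finset.mem_Icc.mp hk).2) hEc)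
      have h1 : PPX K c / (c * PPX k c) ≤ PPX K c / c := by
        apply div_le_div_of_nonneg_left (le_of_lt (PPX_pos K hEc)) hc0
        nlinarith
      have hlogc : 0 ≤ Real.log c := Real.log_nonneg (by linarith)
      have hlogn1 : 0 ≤ Real.log ((n:ℝ)+1) := Real.log_nonneg (by linarith)
      have h2 : PPX K c / c ≤ Real.log ((n:ℝ)+1) ^ K / (n:ℝ) := by
        apply div_le_div₀ (pow_nonneg hlogn1 K)
        · calc PPX K c ≤ Real.log c ^ K := PPX_le_pow_log K hEc
          _ ≤ Real.log ((n:ℝ)+1) ^ K :=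
            pow_le_pow_left₀ hlogc (Real.log_le_log hc0 hcn1) K
        · linarith
        · exact hcn
      have : (1:ℝ) * ((n:ℝ)+1) + (-1) = (n:ℝ) := by ring
      rw [this]
      linarith
    calc ∑ k ∈ Finset.Icc 1 K, PPX K c / (c * PPX k c)
        ≤ ∑ k ∈ Finset.Icc 1 K, Real.log ((n:ℝ)+1) ^ K / (1 * ((n:ℝ)+1) + (-1)) :=
          Finset.sum_le_sum hterm
    _ = (K:ℝ) * (Real.log ((n:ℝ)+1) ^ K / (1 * ((n:ℝ)+1) + (-1))) := by
          rw [Finset.sum_const, Nat.card_Icc]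
          simp [nsmul_eq_mul]
  · have h1 := Real.tendsto_pow_log_div_mul_add_atTop 1 (-1) K one_ne_zero
    have h2 : Tendsto (fun n : ℕ => (n:ℝ) + 1) atTop atTop :=
      tendsto_atTop_add_const_right _ 1 tendsto_natCast_atTop_atTop
    have := (h1.comp h2).const_mul (K:ℝ)
    simpa using this

lemma main_limit (K : ℕ) :
    Tendsto (fun n : ℕ => ((n:ℝ)+1) * PPX K ((n:ℝ)+1) - (n:ℝ) * PPX K (n:ℝ)
      - (PPX K (n:ℝ) + ∑ k ∈ Finset.Icc 1 K, PPX K (n:ℝ) / PPX k (n:ℝ))) atTop (𝓝 0) := by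
  have hev : ∀ᶠ n : ℕ in atTop, eeX K ≤ (n:ℝ) :=
    tendsto_natCast_atTop_atTop.eventually_ge_atTop (eeX K)
  set F : ℝ → ℝ := fun y => PPX K y + ∑ k ∈ Finset.Icc 1 K, PPX K y / PPX k y with hF
  have key : ∀ n : ℕ, eeX K ≤ (n:ℝ) →
      ∃ c, (n:ℝ) < c ∧ c < (n:ℝ)+1 ∧
        ((n:ℝ)+1) * PPX K ((n:ℝ)+1) - (n:ℝ) * PPX K (n:ℝ) = F c := by
    intro n hn
    have hlt : (n:ℝ) < (n:ℝ) + 1 := by linarith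
    obtain ⟨c, hc, hceq⟩ := exists_hasDerivAt_eq_slope (fun y => y * PPX K y) F hlt
      (fun x hx => (hasDerivAt_f K x (le_trans hn hx.1)).continuousAt.continuousWithinAt)
      (fun x hx => hasDerivAt_f K x (le_trans hn (le_of_lt hx.1)))
    rw [add_sub_cancel_left, div_one] at hceq
    exact ⟨c, hc.1, hc.2, hceq.symm⟩
  have Fmono : ∀ x y : ℝ, eeX K ≤ x → x ≤ y → F x ≤ F y := by
    intro x y hx hxy
    apply add_le_add (PPX_mono K hx hxy)
    apply Finset.sum_le_sum
    intro k hk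
    exact PPX_div_mono K k (Finset.mem_Icc.mp hk).2 hx hxy
  apply squeeze_zero' (g := fun n : ℕ => ((K:ℝ)+1) * (PPX K ((n:ℝ)+1) - PPX K (n:ℝ)))
  · filter_upwards [hev] with n hn
    obtain ⟨c, hc1, hc2, hceq⟩ := key n hn
    rw [hceq]
    have := Fmono (n:ℝ) c hn (le_of_lt hc1)
    have hFn : F (n:ℝ) = PPX K (n:ℝ) + ∑ k ∈ Finset.Icc 1 K, PPX K (n:ℝ) / PPX k (n:ℝ) := rfl
    rw [hFn] at this
    linarith
  · filter_upwards [hev] with n hn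
    obtain ⟨c, hc1, hc2, hceq⟩ := key n hn
    rw [hceq]
    have h1 : F c ≤ F ((n:ℝ)+1) := Fmono c ((n:ℝ)+1) (le_trans hn (le_of_lt hc1)) (le_of_lt hc2)
    have hΔ : 0 ≤ PPX K ((n:ℝ)+1) - PPX K (n:ℝ) := by
      have := PPX_mono K hn (by linarith : (n:ℝ) ≤ (n:ℝ)+1)
      linarith
    have h2 : F ((n:ℝ)+1) - F (n:ℝ) ≤ ((K:ℝ)+1) * (PPX K ((n:ℝ)+1) - PPX K (n:ℝ)) := by
      have hterm : ∀ k ∈ Finset.Icc 1 K,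
          PPX K ((n:ℝ)+1) / PPX k ((n:ℝ)+1) - PPX K (n:ℝ) / PPX k (n:ℝ) ≤
            PPX K ((n:ℝ)+1) - PPX K (n:ℝ) := by
        intro k hk
        have hkK := (Finset.mem_Icc.mp hk).2
        have hEk : eeX k ≤ (n:ℝ) := le_trans (eeX_mono hkK) hn
        have hPkn : 1 ≤ PPX k (n:ℝ) := one_le_PPX k hEk
        have hPkn' : PPX k (n:ℝ) ≤ PPX k ((n:ℝ)+1) := PPX_mono k hEk (by linarith)
        have hup : PPX K ((n:ℝ)+1) / PPX k ((n:ℝ)+1) ≤ PPX K ((n:ℝ)+1) / PPX k (n:ℝ) := by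
          apply div_le_div_of_nonneg_left
            (le_of_lt (PPX_pos K (le_trans hn (by linarith)))) (by linarith) hPkn'
        have : PPX K ((n:ℝ)+1) / PPX k (n:ℝ) - PPX K (n:ℝ) / PPX k (n:ℝ) =
            (PPX K ((n:ℝ)+1) - PPX K (n:ℝ)) / PPX k (n:ℝ) := by ring
        have hds : (PPX K ((n:ℝ)+1) - PPX K (n:ℝ)) / PPX k (n:ℝ) ≤
            PPX K ((n:ℝ)+1) - PPX K (n:ℝ) := div_le_self hΔ hPkn
        linarith
      have hsum : ∑ k ∈ Finset.Icc 1 K, PPX K ((n:ℝ)+1) / PPX k ((n:ℝ)+1)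
          - ∑ k ∈ Finset.Icc 1 K, PPX K (n:ℝ) / PPX k (n:ℝ)
          ≤ (K:ℝ) * (PPX K ((n:ℝ)+1) - PPX K (n:ℝ)) := by
        rw [← Finset.sum_sub_distrib]
        calc ∑ k ∈ Finset.Icc 1 K,
            (PPX K ((n:ℝ)+1) / PPX k ((n:ℝ)+1) - PPX K (n:ℝ) / PPX k (n:ℝ))
            ≤ ∑ k ∈ Finset.Icc 1 K, (PPX K ((n:ℝ)+1) - PPX K (n:ℝ)) :=
              Finset.sum_le_sum hterm
        _ = (K:ℝ) * (PPX K ((n:ℝ)+1) - PPX K (n:ℝ)) := by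
              rw [Finset.sum_const, Nat.card_Icc]
              simp [nsmul_eq_mul]
      simp only [hF]
      linarith
    have h3 : F (n:ℝ) ≤ F c := Fmono (n:ℝ) c hn (le_of_lt hc1)
    simp only [hF] at h1 h2 h3 ⊢
    linarith
  · have := (DeltaP_tendsto K).const_mul ((K:ℝ)+1)
    simpa using this

/-- Under the hypotheses of the extended Bertrand–De Morgan test with bounded `s`,
the Kummer quantity `ρ_n = ζ_n · (a_n / a_{n+1}) - ζ_{n+1}` with
`ζ_n = n · ∏_{k=1}^K ln_{(k)} n` satisfies `ρ_n = s_n - 1 + o(1)`.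
Here `Real.log^[k]` is the `k`-th iterate of `Real.log`. -/
theorem kummer_quantity_asymptotics
    (a : ℕ → ℝ) (ha : ∀ n, 0 < a n) (K : ℕ) (hK : 1 ≤ K) (s : ℕ → ℝ)
    (hratio : ∀ᶠ n : ℕ in Filter.atTop,
      a n / a (n + 1) =
        1 + 1 / (n : ℝ)
          + (1 / (n : ℝ)) * ∑ i ∈ Finset.Icc 1 (K - 1),
              1 / ∏ k ∈ Finset.Icc 1 i, Real.log^[k] (n : ℝ)
          + s n / ((n : ℝ) * ∏ k ∈ Finset.Icc 1 K, Real.log^[k] (n : ℝ)))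
    (hbdd : ∃ M : ℝ, ∀ n, |s n| ≤ M)
    (ζ : ℕ → ℝ)
    (hζ : ∀ n, ζ n = (n : ℝ) * ∏ k ∈ Finset.Icc 1 K, Real.log^[k] (n : ℝ)) :
    Filter.Tendsto
      (fun n : ℕ => (ζ n * (a n / a (n + 1)) - ζ (n + 1)) - s n + 1)
      Filter.atTop (nhds 0) := by
  obtain ⟨m, rfl⟩ : ∃ m, K = m + 1 := ⟨K - 1, by omega⟩
  have hev : ∀ᶠ n : ℕ in atTop, eeX (m+1) ≤ (n:ℝ) :=
    tendsto_natCast_atTop_atTop.eventually_ge_atTop (eeX (m+1))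
  have hmain := (main_limit (m+1)).neg
  rw [neg_zero] at hmain
  apply hmain.congr'
  filter_upwards [hratio, hev] with n hr hn
  have hn0 : (0:ℝ) < (n:ℝ) := lt_of_lt_of_le one_pos (le_trans (one_le_eeX _) hn)
  have hP : (0:ℝ) < PPX (m+1) (n:ℝ) := PPX_pos _ hn
  have hζn : ζ n = (n:ℝ) * PPX (m+1) (n:ℝ) := hζ n
  have hζn1 : ζ (n+1) = ((n:ℝ)+1) * PPX (m+1) ((n:ℝ)+1) := by
    have := hζ (n+1)
    push_cast at this
    exact this
  have hr' : a n / a (n + 1) =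
      1 + 1 / (n:ℝ) + (1 / (n:ℝ)) * ∑ i ∈ Finset.Icc 1 m, 1 / PPX i (n:ℝ)
        + s n / ((n:ℝ) * PPX (m+1) (n:ℝ)) := by
    have h2 : m + 1 - 1 = m := rfl
    rw [h2] at hr
    exact hr
  have e1 : ζ n * (a n / a (n + 1)) =
      (n:ℝ) * PPX (m+1) (n:ℝ) + PPX (m+1) (n:ℝ)
        + ∑ i ∈ Finset.Icc 1 m, PPX (m+1) (n:ℝ) / PPX i (n:ℝ) + s n := by
    rw [hζn, hr']
    have hstep : (n:ℝ) * PPX (m+1) (n:ℝ) *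
        (1 + 1 / (n:ℝ) + (1 / (n:ℝ)) * ∑ i ∈ Finset.Icc 1 m, 1 / PPX i (n:ℝ)
          + s n / ((n:ℝ) * PPX (m+1) (n:ℝ)))
        = (n:ℝ) * PPX (m+1) (n:ℝ) + PPX (m+1) (n:ℝ)
          + PPX (m+1) (n:ℝ) * ∑ i ∈ Finset.Icc 1 m, 1 / PPX i (n:ℝ) + s n := by
      field_simp
    rw [hstep, Finset.mul_sum]
    congr 1
    congr 1
    apply Finset.sum_congr rfl
    intro i hi
    rw [mul_one_div]
  have e2 : ∑ k ∈ Finset.Icc 1 (m+1), PPX (m+1) (n:ℝ) / PPX k (n:ℝ)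
      = (∑ i ∈ Finset.Icc 1 m, PPX (m+1) (n:ℝ) / PPX i (n:ℝ)) + 1 := by
    rw [Finset.sum_Icc_succ_top (Nat.le_add_left 1 m), div_self (ne_of_gt hP)]
  rw [e1, hζn1, e2]
  ring
end

section
/- Let (a_n) be a sequence of positive real numbers and K ≥ 1 an integer. Suppose that for all sufficiently large n, a_n/a_{n+1} = 1 + 1/n + (1/n)·∑_{i=1}^{K} 1/(∏_{k=1}^{i} ln_{(k)} n) + R_n, where the remainder satisfies n·(∏_{k=1}^{K+1} ln_{(k)} n)·R_n → 0 as n → ∞ (i.e. R_n = o(1/(n·∏_{k=1}^{K+1} ln_{(k)} n))). Then the series ∑_{n=1}^∞ a_n diverges (is not summable). -/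
open Filter Finset Real

namespace ETRD

/-- iterated log tends to infinity -/
lemma tendsto_iterLog (k : ℕ) : Tendsto (fun x : ℝ => Real.log^[k] x) atTop atTop := by
  induction k with
  | zero => exact tendsto_id
  | succ k ih =>
    have : (fun x : ℝ => Real.log^[k+1] x) = (fun x => Real.log^[k] x) ∘ Real.log := by
      funext x; simp [Function.iterate_succ_apply]
    rw [this]
    exact ih.comp Real.tendsto_log_atTop

def Good (m : ℕ) (x : ℝ) : Prop := ∀ k ≤ m, 2 ≤ Real.log^[k] x

lemma good_eventually (m : ℕ) : ∀ᶠ x : ℝ in atTop, Good m x := by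
  have h : ∀ k, ∀ᶠ x : ℝ in atTop, 2 ≤ Real.log^[k] x := fun k =>
    (tendsto_iterLog k).eventually_ge_atTop 2
  have := (eventually_all_finset (Finset.range (m+1))).2 (fun k _ => h k)
  filter_upwards [this] with x hx k hk
  exact hx k (Finset.mem_range.2 (Nat.lt_succ_of_le hk))

lemma good_mono {m : ℕ} {x y : ℝ} (h : Good m x) (hxy : x ≤ y) :
    ∀ k ≤ m, Real.log^[k] x ≤ Real.log^[k] y := by
  intro k hk
  induction k with
  | zero => simpa using hxy
  | succ k ih =>
    have hk' : k ≤ m := Nat.le_of_succ_le hk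
    have h2 : 2 ≤ Real.log^[k] x := h k hk'
    rw [Function.iterate_succ_apply', Function.iterate_succ_apply']
    exact Real.log_le_log (by linarith) (ih hk')

lemma good_of_le {m : ℕ} {x y : ℝ} (h : Good m x) (hxy : x ≤ y) : Good m y :=
  fun k hk => le_trans (h k hk) (good_mono h hxy k hk)

lemma log_sub_log_le {a b : ℝ} (ha : 0 < a) (hab : a ≤ b) :
    Real.log b - Real.log a ≤ (b - a) / a := by
  have hb : 0 < b := lt_of_lt_of_le ha hab
  have := Real.log_le_sub_one_of_pos (x := b / a) (by positivity)
  rw [Real.log_div hb.ne' ha.ne'] at this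
  have : Real.log b - Real.log a ≤ b / a - 1 := this
  rw [div_sub' ha.ne'] at this
  convert this using 2
  ring

lemma le_log_sub_log {a b : ℝ} (ha : 0 < a) (hab : a ≤ b) :
    (b - a) / b ≤ Real.log b - Real.log a := by
  have hb : 0 < b := lt_of_lt_of_le ha hab
  have := Real.log_le_sub_one_of_pos (x := a / b) (by positivity)
  rw [Real.log_div ha.ne' hb.ne'] at this
  have h2 : Real.log a - Real.log b ≤ a / b - 1 := this
  have h3 : 1 - a/b ≤ Real.log b - Real.log a := by linarith
  calc (b - a)/b = 1 - a/b := by field_simp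
  _ ≤ _ := h3

noncomputable def Q (j : ℕ) (x : ℝ) : ℝ := ∏ k ∈ Finset.Icc 1 j, Real.log^[k] x

lemma Q_zero (x : ℝ) : Q 0 x = 1 := by simp [Q]

lemma Q_succ (j : ℕ) (x : ℝ) : Q (j+1) x = Q j x * Real.log^[j+1] x := by
  rw [Q, Q, Finset.prod_Icc_succ_top (by omega)]

lemma one_le_Q {m : ℕ} {x : ℝ} (h : Good m x) {j : ℕ} (hj : j ≤ m) : 1 ≤ Q j x := by
  induction j with
  | zero => simp [Q_zero]
  | succ j ih =>
    rw [Q_succ]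
    have h1 := ih (Nat.le_of_succ_le hj)
    have h2 := h (j+1) hj
    nlinarith

lemma Q_pos {m : ℕ} {x : ℝ} (h : Good m x) {j : ℕ} (hj : j ≤ m) : 0 < Q j x :=
  lt_of_lt_of_le one_pos (one_le_Q h hj)

lemma Q_mono {m : ℕ} {x y : ℝ} (h : Good m x) (hxy : x ≤ y) {j : ℕ} (hj : j ≤ m) :
    Q j x ≤ Q j y := by
  induction j with
  | zero => simp [Q_zero]
  | succ j ih =>
    rw [Q_succ, Q_succ]
    have h1 := ih (Nat.le_of_succ_le hj)
    have h2 := good_mono h hxy (j+1) hj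
    have h3 := h (j+1) hj
    have h4 := one_le_Q h (Nat.le_of_succ_le hj)
    nlinarith



lemma d_nonneg {m : ℕ} {x : ℝ} (h : Good m x) {k : ℕ} (hk : k ≤ m) :
    0 ≤ Real.log^[k] (x+1) - Real.log^[k] x :=
  sub_nonneg.2 (good_mono h (by linarith) k hk)

/-- upper bound on iterated log increment -/
lemma d_upper {m : ℕ} {x : ℝ} (h : Good m x) :
    ∀ k ≤ m, Real.log^[k+1] (x+1) - Real.log^[k+1] x ≤ 1 / (x * Q k x) := by
  intro k hk
  induction k with
  | zero =>
    have hx : (0:ℝ) < x := by have h0 := h 0 (Nat.zero_le m); simp only [Function.iterate_zero, id] at h0; linarith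
    have := log_sub_log_le hx (by linarith : x ≤ x + 1)
    simpa [Q_zero] using this
  | succ k ih =>
    have hk' : k ≤ m := Nat.le_of_succ_le hk
    have hL : 2 ≤ Real.log^[k+1] x := h (k+1) hk
    have hL' : Real.log^[k+1] x ≤ Real.log^[k+1] (x+1) :=
      good_mono h (by linarith) (k+1) hk
    have h1 : Real.log^[k+2] (x+1) - Real.log^[k+2] x ≤
        (Real.log^[k+1] (x+1) - Real.log^[k+1] x) / Real.log^[k+1] x := by
      rw [Function.iterate_succ_apply' Real.log (k+1), Function.iterate_succ_apply' Real.log (k+1)]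
      exact log_sub_log_le (by linarith) hL'
    have h2 := ih hk'
    have hx : (0:ℝ) < x := by have h0 := h 0 (Nat.zero_le m); simp only [Function.iterate_zero, id] at h0; linarith
    have hQ : 0 < Q k x := Q_pos h hk'
    calc Real.log^[k+2] (x+1) - Real.log^[k+2] x
        ≤ (Real.log^[k+1] (x+1) - Real.log^[k+1] x) / Real.log^[k+1] x := h1
      _ ≤ (1 / (x * Q k x)) / Real.log^[k+1] x := by
          gcongr
      _ = 1 / (x * Q (k+1) x) := by rw [Q_succ]; field_simp

/-- lower bound on iterated log increment -/
lemma d_lower {m : ℕ} {x : ℝ} (h : Good m x) :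
    ∀ k ≤ m, 1 / ((x+1) * Q k (x+1)) ≤ Real.log^[k+1] (x+1) - Real.log^[k+1] x := by
  intro k hk
  induction k with
  | zero =>
    have hx : (0:ℝ) < x := by have h0 := h 0 (Nat.zero_le m); simp only [Function.iterate_zero, id] at h0; linarith
    have := le_log_sub_log hx (by linarith : x ≤ x + 1)
    simpa [Q_zero] using this
  | succ k ih =>
    have hk' : k ≤ m := Nat.le_of_succ_le hk
    have hL : 2 ≤ Real.log^[k+1] x := h (k+1) hk
    have hL' : Real.log^[k+1] x ≤ Real.log^[k+1] (x+1) :=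
      good_mono h (by linarith) (k+1) hk
    have h1 : (Real.log^[k+1] (x+1) - Real.log^[k+1] x) / Real.log^[k+1] (x+1) ≤
        Real.log^[k+2] (x+1) - Real.log^[k+2] x := by
      rw [Function.iterate_succ_apply' Real.log (k+1), Function.iterate_succ_apply' Real.log (k+1)]
      exact le_log_sub_log (by linarith) hL'
    have h2 := ih hk'
    have hx : (0:ℝ) < x := by have h0 := h 0 (Nat.zero_le m); simp only [Function.iterate_zero, id] at h0; linarith
    have hQ : 0 < Q k (x+1) := Q_pos (good_of_le h (by linarith)) hk'
    have hLp : 0 < Real.log^[k+1] (x+1) := by linarith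
    calc 1 / ((x+1) * Q (k+1) (x+1))
        = (1 / ((x+1) * Q k (x+1))) / Real.log^[k+1] (x+1) := by
          rw [Q_succ]; field_simp
      _ ≤ (Real.log^[k+1] (x+1) - Real.log^[k+1] x) / Real.log^[k+1] (x+1) := by
          gcongr
      _ ≤ _ := h1

lemma Q_diff {m : ℕ} {x : ℝ} (h : Good m x) :
    ∀ j ≤ m, Q j (x+1) - Q j x ≤ (3^j / x) * Q j x := by
  have hx : (0:ℝ) < x := by
    have h0 := h 0 (Nat.zero_le m); simp only [Function.iterate_zero, id] at h0; linarith
  have hx2 : (2:ℝ) ≤ x := by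
    have h0 := h 0 (Nat.zero_le m); simpa using h0
  intro j hj
  induction j with
  | zero => simp [Q_zero]; positivity
  | succ j ih =>
    have hj' : j ≤ m := Nat.le_of_succ_le hj
    have ihj := ih hj'
    have hL : 2 ≤ Real.log^[j+1] x := h (j+1) hj
    have hd : Real.log^[j+1] (x+1) - Real.log^[j+1] x ≤ 1/x := by
      have h1 := d_upper h j hj'
      have h2 : 1 ≤ Q j x := one_le_Q h hj'
      calc Real.log^[j+1] (x+1) - Real.log^[j+1] x ≤ 1/(x * Q j x) := h1
        _ ≤ 1/x := by rw [div_le_div_iff₀ (by positivity) hx]; nlinarith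
    have hL' : Real.log^[j+1] (x+1) ≤ 2 * Real.log^[j+1] x := by
      have : 1/x ≤ 1 := by rw [div_le_one hx]; linarith
      linarith
    have hdn : 0 ≤ Real.log^[j+1] (x+1) - Real.log^[j+1] x := d_nonneg h hj
    have hQ : 1 ≤ Q j x := one_le_Q h hj'
    have hQd : 0 ≤ Q j (x+1) - Q j x := sub_nonneg.2 (Q_mono h (by linarith) hj')
    rw [Q_succ, Q_succ]
    have key : Q j (x+1) * Real.log^[j+1] (x+1) - Q j x * Real.log^[j+1] x
        = (Q j (x+1) - Q j x) * Real.log^[j+1] (x+1)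
          + Q j x * (Real.log^[j+1] (x+1) - Real.log^[j+1] x) := by ring
    rw [key]
    have h3 : (Q j (x+1) - Q j x) * Real.log^[j+1] (x+1)
        ≤ (3^j / x) * Q j x * (2 * Real.log^[j+1] x) := by
      apply mul_le_mul ihj hL' (by linarith) (by positivity)
    have h4 : Q j x * (Real.log^[j+1] (x+1) - Real.log^[j+1] x) ≤ Q j x * (1/x) :=
      mul_le_mul_of_nonneg_left hd (by linarith)
    have h5 : (3:ℝ)^j / x * Q j x * (2 * Real.log^[j+1] x) + Q j x * (1/x)
        ≤ 3^(j+1) / x * (Q j x * Real.log^[j+1] x) := by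
      have p1 : (1:ℝ) ≤ 3^j := one_le_pow₀ (by norm_num)
      have hcore : 2*3^j*(Q j x * Real.log^[j+1] x) + Q j x
          ≤ 3^(j+1)*(Q j x * Real.log^[j+1] x) := by
        have e : (3:ℝ)^(j+1) = 3*3^j := by ring
        have q1 : Q j x * 2 ≤ Q j x * Real.log^[j+1] x :=
          mul_le_mul_of_nonneg_left hL (by linarith)
        have q2 : 1*(Q j x * Real.log^[j+1] x) ≤ 3^j*(Q j x * Real.log^[j+1] x) := by
          apply mul_le_mul_of_nonneg_right p1; nlinarith
        nlinarith
      calc (3:ℝ)^j / x * Q j x * (2 * Real.log^[j+1] x) + Q j x * (1/x)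
          = (2*3^j*(Q j x * Real.log^[j+1] x) + Q j x)/x := by ring
        _ ≤ (3^(j+1)*(Q j x * Real.log^[j+1] x))/x := by gcongr
        _ = 3^(j+1) / x * (Q j x * Real.log^[j+1] x) := by ring
    linarith



lemma prod_lower {m : ℕ} {x : ℝ} (h : Good m x) :
    ∀ j ≤ m, Q j x + ∑ k ∈ Finset.Icc 1 j,
        (Real.log^[k] (x+1) - Real.log^[k] x) * (Q j x / Real.log^[k] x)
      ≤ Q j (x+1) := by
  have hx : (0:ℝ) < x := by
    have h0 := h 0 (Nat.zero_le m); simp only [Function.iterate_zero, id] at h0; linarith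
  intro j hj
  induction j with
  | zero => simp [Q_zero]
  | succ j ih =>
    have hj' : j ≤ m := Nat.le_of_succ_le hj
    have ihj := ih hj'
    have hL : 2 ≤ Real.log^[j+1] x := h (j+1) hj
    have hL' : Real.log^[j+1] x ≤ Real.log^[j+1] (x+1) := good_mono h (by linarith) (j+1) hj
    have hQ : 1 ≤ Q j x := one_le_Q h hj'
    have hT : 0 ≤ ∑ k ∈ Finset.Icc 1 j,
        (Real.log^[k] (x+1) - Real.log^[k] x) * (Q j x / Real.log^[k] x) := by
      apply Finset.sum_nonneg
      intro k hk
      rcases Finset.mem_Icc.mp hk with ⟨hk1, hk2⟩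
      have hdk : 0 ≤ Real.log^[k] (x+1) - Real.log^[k] x := d_nonneg h (hk2.trans hj')
      have hLk : 2 ≤ Real.log^[k] x := h k (hk2.trans hj')
      positivity
    rw [Q_succ, Q_succ, Finset.sum_Icc_succ_top (by omega)]
    -- new sum: ∑_{k=1}^{j} d_k * (Q j x * L_{j+1} x / L_k x) + d_{j+1} * Q j x
    have hsum : ∑ k ∈ Finset.Icc 1 j,
        (Real.log^[k] (x+1) - Real.log^[k] x) * (Q j x * Real.log^[j+1] x / Real.log^[k] x)
        = (∑ k ∈ Finset.Icc 1 j,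
            (Real.log^[k] (x+1) - Real.log^[k] x) * (Q j x / Real.log^[k] x))
          * Real.log^[j+1] x := by
      rw [Finset.sum_mul]; apply Finset.sum_congr rfl; intro k hk; ring
    have hterm : (Real.log^[j+1] (x+1) - Real.log^[j+1] x)
        * (Q j x * Real.log^[j+1] x / Real.log^[j+1] x) =
        (Real.log^[j+1] (x+1) - Real.log^[j+1] x) * Q j x := by
      have hLne : Real.log^[j+1] x ≠ 0 := by
        intro e; rw [e] at hL; norm_num at hL
      rw [Function.iterate_succ_apply] at hLne
      field_simp [hLne]
    rw [hsum, hterm]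
    -- goal: Q j x * L + T*L + d*Q j x ≤ Q j (x+1) * L'
    have expand : Q j (x+1) * Real.log^[j+1] (x+1)
        ≥ (Q j x + (∑ k ∈ Finset.Icc 1 j,
            (Real.log^[k] (x+1) - Real.log^[k] x) * (Q j x / Real.log^[k] x)))
          * Real.log^[j+1] (x+1) := by
      apply mul_le_mul_of_nonneg_right ihj (by linarith)
    have h1 : (∑ k ∈ Finset.Icc 1 j,
        (Real.log^[k] (x+1) - Real.log^[k] x) * (Q j x / Real.log^[k] x)) * Real.log^[j+1] x
        ≤ (∑ k ∈ Finset.Icc 1 j,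
        (Real.log^[k] (x+1) - Real.log^[k] x) * (Q j x / Real.log^[k] x)) * Real.log^[j+1] (x+1) :=
      mul_le_mul_of_nonneg_left hL' hT
    have e : Q j x * Real.log^[j+1] (x+1) = Q j x * Real.log^[j+1] x
        + (Real.log^[j+1] (x+1) - Real.log^[j+1] x) * Q j x := by ring
    have e2 : (Q j x + (∑ k ∈ Finset.Icc 1 j,
        (Real.log^[k] (x+1) - Real.log^[k] x) * (Q j x / Real.log^[k] x)))
          * Real.log^[j+1] (x+1) = Q j x * Real.log^[j+1] (x+1)
        + (∑ k ∈ Finset.Icc 1 j,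
        (Real.log^[k] (x+1) - Real.log^[k] x) * (Q j x / Real.log^[k] x)) * Real.log^[j+1] (x+1) := by
      ring
    linarith



set_option maxHeartbeats 1000000 in
lemma main_ineq (K : ℕ) {x r : ℝ} (h : Good (K+2) x)
    (hsmall : ((K:ℝ)+1) * 3^(K+2) * Q (K+1) x ≤ x)
    (hr : x * Q (K+1) x * r ≤ 1/8) :
    x * Q (K+1) x * (1 + 1/x + (1/x) * (∑ i ∈ Finset.Icc 1 K, 1/Q i x) + r)
      ≤ (x+1) * Q (K+1) (x+1) := by
  have hx : (0:ℝ) < x := by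
    have h0 := h 0 (Nat.zero_le _); simp only [Function.iterate_zero, id] at h0; linarith
  have h' : Good (K+2) (x+1) := good_of_le h (by linarith)
  have hQ : 1 ≤ Q (K+1) x := one_le_Q h (by omega)
  have hQpos : 0 < Q (K+1) x := by linarith
  set S := ∑ i ∈ Finset.Icc 1 K, 1/Q i x with hS
  have expand : x * Q (K+1) x * (1 + 1/x + (1/x) * S + r)
      = (x+1) * Q (K+1) x + Q (K+1) x * S + x * Q (K+1) x * r := by
    field_simp
  rw [expand]
  have A := prod_lower h (K+1) (by omega)
  set T := ∑ k ∈ Finset.Icc 1 (K+1),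
      (Real.log^[k] (x+1) - Real.log^[k] x) * (Q (K+1) x / Real.log^[k] x) with hT
  -- reduce to Q S + x Q r ≤ (x+1) * T
  have hmain : Q (K+1) x * S + x * Q (K+1) x * r ≤ (x+1) * T := by
    -- per-term lower bound for (x+1)*T
    have claim1 : ∀ k ∈ Finset.Icc 1 (K+1),
        Q (K+1) x * (1/(Q (k-1) (x+1) * Real.log^[k] x))
          ≤ (x+1) * ((Real.log^[k] (x+1) - Real.log^[k] x) * (Q (K+1) x / Real.log^[k] x)) := by
      intro k hk
      rcases Finset.mem_Icc.mp hk with ⟨hk1, hk2⟩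
      obtain ⟨k', rfl⟩ : ∃ k', k = k'+1 := ⟨k-1, by omega⟩
      have hd := d_lower h k' (by omega)
      have hQ' : 0 < Q k' (x+1) := Q_pos h' (by omega)
      have hL : 2 ≤ Real.log^[k'+1] x := h (k'+1) (by omega)
      have e : (k'+1) - 1 = k' := by omega
      rw [e]
      set L := Real.log^[k'+1] x with hLdef
      set B := Q k' (x+1) with hBdef
      have hLpos : (0:ℝ) < L := by rw [hLdef]; linarith
      calc Q (K+1) x * (1/(B * L))
          = (x+1) * ((1/((x+1) * B)) * (Q (K+1) x / L)) := by
            field_simp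
        _ ≤ (x+1) * ((Real.log^[k'+1] (x+1) - L)
              * (Q (K+1) x / L)) := by
            gcongr
    have hTlow : ∑ k ∈ Finset.Icc 1 (K+1),
        Q (K+1) x * (1/(Q (k-1) (x+1) * Real.log^[k] x)) ≤ (x+1) * T := by
      rw [hT, Finset.mul_sum]
      exact Finset.sum_le_sum claim1
    -- split the sum
    rw [Finset.sum_Icc_succ_top (by omega : 1 ≤ K+1)] at hTlow
    -- bound each of first K terms from below by Q/Q_k x - Q*3^K/x
    have claim2 : ∀ k ∈ Finset.Icc 1 K,
        Q (K+1) x * (1/Q k x) - Q (K+1) x * (3^K/x)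
          ≤ Q (K+1) x * (1/(Q (k-1) (x+1) * Real.log^[k] x)) := by
      intro k hk
      rcases Finset.mem_Icc.mp hk with ⟨hk1, hk2⟩
      obtain ⟨k', rfl⟩ : ∃ k', k = k'+1 := ⟨k-1, by omega⟩
      have e : (k'+1) - 1 = k' := by omega
      rw [e]
      have hQ'x : 1 ≤ Q k' x := one_le_Q h (by omega)
      have hQ'1 : 1 ≤ Q k' (x+1) := one_le_Q h' (by omega)
      have hL : 2 ≤ Real.log^[k'+1] x := h (k'+1) (by omega)
      have hdiff : Q k' (x+1) - Q k' x ≤ (3^k'/x) * Q k' x := Q_diff h k' (by omega)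
      have key : 1/Q (k'+1) x - 1/(Q k' (x+1) * Real.log^[k'+1] x) ≤ 3^K/x := by
        rw [Q_succ]
        set L := Real.log^[k'+1] x with hLdef
        set A := Q k' x with hAdef
        set B := Q k' (x+1) with hBdef
        have hLpos : (0:ℝ) < L := by rw [hLdef]; linarith
        have hAB : A ≤ B := Q_mono h (by linarith) (by omega)
        have e2 : 1/(A * L) - 1/(B * L) = (B - A) / (A * B * L) := by
          field_simp
        rw [e2]
        have hnum : (0:ℝ) ≤ 3^k'/x * A := by positivity
        calc (B - A) / (A * B * L)
            ≤ ((3^k'/x) * A) / (A * 1 * 2) := by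
              have hA1 : (1:ℝ) ≤ A := hQ'x
              have hB1 : (1:ℝ) ≤ B := hQ'1
              have hBL : (2:ℝ) ≤ B*L := by nlinarith
              exact div_le_div₀ hnum hdiff (by nlinarith)
                (by calc A*1*2 = A*2 := by ring
                      _ ≤ A*(B*L) := mul_le_mul_of_nonneg_left hBL (by linarith)
                      _ = A*B*L := by ring)
          _ = 3^k'/(2*x) := by
              have hA0 : A ≠ 0 := ne_of_gt (by linarith)
              have hx0 : x ≠ 0 := ne_of_gt hx
              field_simp
          _ ≤ 3^K/x := by
              rw [div_le_div_iff₀ (by linarith) hx]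
              have h3 : (3:ℝ)^k' ≤ 3^K := pow_le_pow_right₀ (by norm_num) (by omega)
              nlinarith [mul_le_mul_of_nonneg_right h3 (le_of_lt hx), mul_pos (pow_pos (by norm_num : (0:ℝ)<3) K) hx]
      nlinarith [mul_le_mul_of_nonneg_left key (le_of_lt hQpos)]
    have s1 : ∑ k ∈ Finset.Icc 1 K, (Q (K+1) x * (1/Q k x) - Q (K+1) x * (3^K/x))
        ≤ ∑ k ∈ Finset.Icc 1 K, Q (K+1) x * (1/(Q (k-1) (x+1) * Real.log^[k] x)) :=
      Finset.sum_le_sum claim2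
    have s1' : ∑ k ∈ Finset.Icc 1 K, (Q (K+1) x * (1/Q k x) - Q (K+1) x * (3^K/x))
        = Q (K+1) x * S - (K:ℝ) * (Q (K+1) x * (3^K/x)) := by
      rw [Finset.sum_sub_distrib, Finset.sum_const, Nat.card_Icc]
      rw [hS, Finset.mul_sum]
      simp
    have hp9 : (0:ℝ) < 3^K := by positivity
    have s2 : (K:ℝ) * (Q (K+1) x * (3^K/x)) ≤ 1/9 := by
      have h1 : (K:ℝ)*3^(K+2)*Q (K+1) x ≤ x := by
        refine le_trans ?_ hsmall
        have : (0:ℝ) < 3^(K+2) := by positivity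
        nlinarith
      have e9 : (3:ℝ)^(K+2) = 9 * 3^K := by ring
      rw [show (1:ℝ)/9 = 1/9 from rfl, le_div_iff₀ (by norm_num : (0:ℝ) < 9)]
      have : (K:ℝ) * (Q (K+1) x * (3^K/x)) * 9 = ((K:ℝ)*(9*3^K)*Q (K+1) x)/x := by
        field_simp
      rw [this, div_le_one hx, ← e9]
      exact h1
    have e1 : K + 1 - 1 = K := by omega
    have s3 : (1:ℝ)/2 ≤ Q (K+1) x * (1/(Q (K+1-1) (x+1) * Real.log^[K+1] x)) := by
      rw [e1]
      have h2Q : Q (K+1) (x+1) ≤ 2 * Q (K+1) x := by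
        have hd := Q_diff h (K+1) (by omega)
        have h31 : (3:ℝ)^(K+1) ≤ x := by
          have : (0:ℝ) < 3^(K+2) := by positivity
          have h3 : (3:ℝ)^(K+1) ≤ 3^(K+2) := by
            apply pow_le_pow_right₀ (by norm_num); omega
          have hK0 : (0:ℝ) ≤ (K:ℝ) := Nat.cast_nonneg K
          have t1 : (3:ℝ)^(K+2)*1 ≤ ((K:ℝ)+1)*3^(K+2)*Q (K+1) x := by
            nlinarith [mul_nonneg hK0 (by linarith : (0:ℝ) ≤ Q (K+1) x - 1)]
          linarith
        have : (3:ℝ)^(K+1)/x ≤ 1 := by rw [div_le_one hx]; exact h31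
        nlinarith
      have hLle : Real.log^[K+1] x ≤ Real.log^[K+1] (x+1) :=
        good_mono h (by linarith) (K+1) (by omega)
      have hQK1 : 0 < Q K (x+1) := Q_pos h' (by omega)
      have hLpos : (0:ℝ) < Real.log^[K+1] x := by
        have := h (K+1) (by omega); linarith
      have hD : Q K (x+1) * Real.log^[K+1] x ≤ 2 * Q (K+1) x := by
        calc Q K (x+1) * Real.log^[K+1] x ≤ Q K (x+1) * Real.log^[K+1] (x+1) := by
              apply mul_le_mul_of_nonneg_left hLle (le_of_lt hQK1)
          _ = Q (K+1) (x+1) := (Q_succ K (x+1)).symm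
          _ ≤ 2 * Q (K+1) x := h2Q
      have hDpos : 0 < Q K (x+1) * Real.log^[K+1] x := by positivity
      calc (1:ℝ)/2 = Q (K+1) x / (2 * Q (K+1) x) := by field_simp
        _ ≤ Q (K+1) x / (Q K (x+1) * Real.log^[K+1] x) := by
            apply div_le_div₀ (le_of_lt hQpos) le_rfl hDpos hD
        _ = Q (K+1) x * (1/(Q K (x+1) * Real.log^[K+1] x)) := by ring
    linarith [s1, s1', s2, s3, hTlow, hr]
  have hfinal := mul_le_mul_of_nonneg_left A (by linarith : (0:ℝ) ≤ x+1)
  have e2 : (x+1) * (Q (K+1) x + T) = (x+1) * Q (K+1) x + (x+1) * T := by ring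
  linarith



lemma iterLog_le_log {m : ℕ} {x : ℝ} (h : Good m x) :
    ∀ k ≤ m, 1 ≤ k → Real.log^[k] x ≤ Real.log x := by
  intro k hk hk1
  induction k with
  | zero => omega
  | succ k ih =>
    rcases Nat.eq_zero_or_pos k with hk0 | hkpos
    · subst hk0; simp
    · have h1 := ih (by omega) hkpos
      have h2 : 0 ≤ Real.log^[k] x := by have := h k (by omega); linarith
      calc Real.log^[k+1] x = Real.log (Real.log^[k] x) := Function.iterate_succ_apply' _ _ _
        _ ≤ Real.log^[k] x := Real.log_le_self h2
        _ ≤ Real.log x := h1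

lemma Q_le_pow_log {m : ℕ} {x : ℝ} (h : Good m x) :
    ∀ j ≤ m, Q j x ≤ (Real.log x) ^ j := by
  intro j hj
  induction j with
  | zero => simp [Q_zero]
  | succ j ih =>
    rw [Q_succ, pow_succ]
    have h1 := ih (by omega)
    have h2 : Real.log^[j+1] x ≤ Real.log x := iterLog_le_log h (j+1) hj (by omega)
    have h3 : 0 ≤ Real.log^[j+1] x := by have := h (j+1) hj; linarith
    have h4 : 0 < Q j x := Q_pos h (by omega)
    nlinarith

lemma eventually_small (K : ℕ) :
    ∀ᶠ x : ℝ in atTop, Good (K+2) x →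
      ((K:ℝ)+1) * 3^(K+2) * Q (K+1) x ≤ x := by
  set C : ℝ := ((K:ℝ)+1) * 3^(K+2) with hC
  have hCpos : 0 < C := by positivity
  have ho : (fun x : ℝ => Real.log x ^ (K+1)) =o[atTop] id := Real.isLittleO_pow_log_id_atTop
  have hb := ho.bound (show (0:ℝ) < 1/C by positivity)
  filter_upwards [hb, Filter.eventually_ge_atTop (0:ℝ)] with x hx hx0 hg
  have h2 : Q (K+1) x ≤ (Real.log x)^(K+1) := Q_le_pow_log hg (K+1) (by omega)
  have hlog : (0:ℝ) ≤ Real.log x := by have := hg 1 (by omega); simp at this; linarith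
  rw [Real.norm_eq_abs, Real.norm_eq_abs, abs_of_nonneg (by positivity), id] at hx
  rw [abs_of_nonneg hx0] at hx
  calc C * Q (K+1) x ≤ C * (Real.log x)^(K+1) := by nlinarith
    _ ≤ C * (1/C * x) := by nlinarith
    _ = x := by field_simp


end ETRD

open Filter ETRD in
/-- If `a_n / a_{n+1} = 1 + 1/n + (1/n)·∑_{i=1}^{K} 1/∏_{k=1}^{i} ln_{(k)} n + R_n`
with `R_n = o(1/(n · ∏_{k=1}^{K+1} ln_{(k)} n))`, then `∑ a_n` diverges.
Here `Real.log^[k]` is the `k`-th iterate of `Real.log`. -/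
theorem extended_test_remainder_divergence
    (a : ℕ → ℝ) (ha : ∀ n, 0 < a n) (K : ℕ) (hK : 1 ≤ K) (R : ℕ → ℝ)
    (hratio : ∀ᶠ n : ℕ in Filter.atTop,
      a n / a (n + 1) =
        1 + 1 / (n : ℝ)
          + (1 / (n : ℝ)) * ∑ i ∈ Finset.Icc 1 K,
              1 / ∏ k ∈ Finset.Icc 1 i, Real.log^[k] (n : ℝ)
          + R n)
    (hR : Filter.Tendsto
      (fun n : ℕ => (n : ℝ) * (∏ k ∈ Finset.Icc 1 (K + 1), Real.log^[k] (n : ℝ)) * R n)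
      Filter.atTop (nhds 0)) :
    ¬ Summable a := by
  -- eventual conditions
  have hcast : Tendsto (fun n : ℕ => (n:ℝ)) atTop atTop := tendsto_natCast_atTop_atTop
  have hgood : ∀ᶠ n : ℕ in atTop, Good (K+2) ((n:ℝ)) := hcast.eventually (good_eventually (K+2))
  have hsmall : ∀ᶠ n : ℕ in atTop,
      ((K:ℝ)+1) * 3^(K+2) * Q (K+1) (n:ℝ) ≤ (n:ℝ) := by
    filter_upwards [hcast.eventually (eventually_small K), hgood] with n h1 h2
    exact h1 h2
  have hr8 : ∀ᶠ n : ℕ in atTop, (n:ℝ) * Q (K+1) (n:ℝ) * R n ≤ 1/8 := by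
    have := hR.eventually_lt_const (show (0:ℝ) < 1/8 by norm_num)
    filter_upwards [this] with n h1
    exact le_of_lt h1
  obtain ⟨N, hN⟩ := (hratio.and (hgood.and (hsmall.and hr8))).exists_forall_of_atTop
  -- step inequality
  have step : ∀ n, N ≤ n →
      ((n:ℝ) * Q (K+1) (n:ℝ)) * a n ≤ (((n+1:ℕ):ℝ) * Q (K+1) ((n+1:ℕ):ℝ)) * a (n+1) := by
    intro n hn
    obtain ⟨hrat, hg, hs, hr⟩ := hN n hn
    have hmi := main_ineq K hg hs hr
    simp only [Q] at hmi
    rw [← hrat] at hmi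
    have hx : (0:ℝ) < n := by
      have h0 := hg 0 (Nat.zero_le _); simp only [Function.iterate_zero, id] at h0; linarith
    have hQpos : 0 < Q (K+1) (n:ℝ) := Q_pos hg (by omega)
    have ha1 : 0 < a (n+1) := ha (n+1)
    have e : ((n+1:ℕ):ℝ) = (n:ℝ) + 1 := by push_cast; ring
    rw [e]
    calc ((n:ℝ) * Q (K+1) (n:ℝ)) * a n
        = ((n:ℝ) * Q (K+1) (n:ℝ) * (a n / a (n+1))) * a (n+1) := by
          field_simp
      _ ≤ (((n:ℝ)+1) * Q (K+1) ((n:ℝ)+1)) * a (n+1) := by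
          apply mul_le_mul_of_nonneg_right hmi (le_of_lt ha1)
  -- monotone lower bound
  set f : ℕ → ℝ := fun n => (n:ℝ) * Q (K+1) (n:ℝ) with hf
  have mono : ∀ n, N ≤ n → f N * a N ≤ f n * a n := by
    intro n hn
    induction n with
    | zero => simp_all
    | succ n ih =>
      rcases Nat.lt_or_ge N (n+1) with hlt | hge
      · have hn' : N ≤ n := by omega
        exact le_trans (ih hn') (step n hn')
      · have : N = n+1 := by omega
        subst this; rfl
  obtain ⟨hrat0, hg0, _, _⟩ := hN N le_rfl
  have hxN : (0:ℝ) < N := by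
    have h0 := hg0 0 (Nat.zero_le _); simp only [Function.iterate_zero, id] at h0; linarith
  have hfNpos : 0 < f N := mul_pos hxN (Q_pos hg0 (by omega))
  set c := f N * a N with hc
  have hcpos : 0 < c := mul_pos hfNpos (ha N)
  -- suppose summable
  intro hsum
  set g : ℕ → ℝ := fun n => Real.log^[K+2] (n:ℝ) with hg
  have hdle : ∀ n, N ≤ n → g (n+1) - g n ≤ a n / c := by
    intro n hn
    obtain ⟨_, hgn, _, _⟩ := hN n hn
    have hxn : (0:ℝ) < n := by
      have h0 := hgn 0 (Nat.zero_le _); simp only [Function.iterate_zero, id] at h0; linarith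
    have hd := d_upper hgn (K+1) (by omega)
    have e : ((n+1:ℕ):ℝ) = (n:ℝ) + 1 := by push_cast; ring
    have hfn : 0 < f n := mul_pos hxn (Q_pos hgn (by omega))
    have hca : c ≤ f n * a n := mono n hn
    have han := ha n
    have h1f : 1 / f n ≤ a n / c := by
      rw [div_le_div_iff₀ hfn hcpos]
      calc 1 * c = c := by ring
        _ ≤ f n * a n := hca
        _ = a n * f n := by ring
    calc g (n+1) - g n = Real.log^[K+2] ((n:ℝ)+1) - Real.log^[K+2] (n:ℝ) := by
          rw [hg]; simp only; rw [e]
      _ ≤ 1 / ((n:ℝ) * Q (K+1) (n:ℝ)) := hd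
      _ = 1 / f n := rfl
      _ ≤ a n / c := h1f
  have hdnn : ∀ n, N ≤ n → 0 ≤ g (n+1) - g n := by
    intro n hn
    obtain ⟨_, hgn, _, _⟩ := hN n hn
    have e : ((n+1:ℕ):ℝ) = (n:ℝ) + 1 := by push_cast; ring
    have := d_nonneg (m := K+2) (x := (n:ℝ)) hgn (k := K+2) le_rfl
    rw [hg]; simp only; rw [e]; exact this
  -- summability of telescoping differences
  have hsum' : Summable (fun i => a (N+i) / c) := by
    have h1 : Summable (fun i => a (N+i)) := by
      have h2 := (summable_nat_add_iff (f := a) N).2 hsum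
      exact h2.congr (fun i => by rw [Nat.add_comm])
    exact h1.div_const c
  have hsumh : Summable (fun i => g (N+i+1) - g (N+i)) := by
    apply Summable.of_nonneg_of_le (fun i => hdnn (N+i) (by omega))
      (fun i => hdle (N+i) (by omega)) hsum'
  have htel := hsumh.hasSum.tendsto_sum_nat
  have hteleq : ∀ m, ∑ i ∈ Finset.range m, (g (N+i+1) - g (N+i)) = g (N+m) - g N := by
    intro m
    exact Finset.sum_range_sub (fun i => g (N+i)) m
  rw [show (fun m => ∑ i ∈ Finset.range m, (g (N+i+1) - g (N+i)))
      = fun m => g (N+m) - g N from funext hteleq] at htel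
  -- but g (N+m) → ∞
  have hgtop : Tendsto (fun m => g (N+m)) atTop atTop := by
    apply (tendsto_iterLog (K+2)).comp
    apply tendsto_natCast_atTop_atTop.comp
    exact tendsto_add_atTop_nat N |>.comp tendsto_id |>.congr (fun m => by simp [Nat.add_comm])
  have : Tendsto (fun m => g (N+m) - g N) atTop atTop :=
    hgtop.atTop_add tendsto_const_nhds
  exact not_tendsto_nhds_of_tendsto_atTop this _ htel
end

section
/- Let (a_n) be a sequence of positive real numbers and K ≥ 1 an integer. Suppose that for all sufficiently large n, a_n/a_{n+1} = 1 + 1/n + (1/n)·∑_{i=1}^{K} 1/(∏_{k=1}^{i} ln_{(k)} n) + R_n, where for some constants c > 0 and 0 ≤ r < 1 the remainder satisfies R_n ≥ c/(n·(ln_{(K+1)} n)^r·∏_{k=1}^{K} ln_{(k)} n) for all sufficiently large n. Then the series ∑_{n=1}^∞ a_n converges. -/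
open Filter Real Finset

noncomputable def philog (K : ℕ) (x : ℝ) : ℝ :=
  -(∑ j ∈ Finset.range (K+2), Real.log^[j+1] x) - Real.log^[K+2] x

noncomputable def hfun (K : ℕ) (x : ℝ) : ℝ :=
  ∑ j ∈ Finset.range (K+2), (∏ i ∈ Finset.range (j+1), Real.log^[i] x)⁻¹
    + (∏ i ∈ Finset.range (K+2), Real.log^[i] x)⁻¹

noncomputable def Gfun (K : ℕ) (x : ℝ) : ℝ := (Real.log^[K+1] x)⁻¹

lemma iterLog_tendsto (k : ℕ) : Tendsto (Real.log^[k]) atTop atTop := by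
  induction k with
  | zero => simpa using tendsto_id
  | succ k ih =>
    rw [Function.iterate_succ']
    exact Real.tendsto_log_atTop.comp ih

lemma hasDerivAt_iterLog (k : ℕ) (x : ℝ) (h : ∀ j < k, 0 < Real.log^[j] x) :
    HasDerivAt (Real.log^[k]) (∏ j ∈ Finset.range k, Real.log^[j] x)⁻¹ x := by
  induction k with
  | zero => simpa using hasDerivAt_id x
  | succ k ih =>
    have hk : ∀ j < k, 0 < Real.log^[j] x := fun j hj => h j (hj.trans k.lt_succ_self)
    have hlog := Real.hasDerivAt_log (ne_of_gt (h k k.lt_succ_self))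
    have := hlog.comp x (ih hk)
    rw [Function.iterate_succ']
    refine this.congr_deriv ?_
    rw [Finset.prod_range_succ, mul_inv, mul_comm]

lemma iterLog_le_iterLog (k : ℕ) {x y : ℝ} (hx : ∀ j < k, 0 < Real.log^[j] x)
    (hxy : x ≤ y) : Real.log^[k] x ≤ Real.log^[k] y := by
  induction k with
  | zero => simpa using hxy
  | succ k ih =>
    rw [Function.iterate_succ_apply', Function.iterate_succ_apply']
    exact Real.log_le_log (hx k k.lt_succ_self)
      (ih fun j hj => hx j (hj.trans k.lt_succ_self))

lemma prod_iterLog_pos {m : ℕ} {x : ℝ} (hx : ∀ j < m, 0 < Real.log^[j] x) {s : ℕ}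
    (hs : s ≤ m) : 0 < ∏ i ∈ Finset.range s, Real.log^[i] x :=
  Finset.prod_pos fun i hi => hx i (lt_of_lt_of_le (Finset.mem_range.mp hi) hs)

lemma one_le_prod_iterLog {m : ℕ} {x : ℝ} (hx : ∀ j < m, 1 ≤ Real.log^[j] x) {s : ℕ}
    (hs : s ≤ m) : 1 ≤ ∏ i ∈ Finset.range s, Real.log^[i] x :=
  calc (1:ℝ) = ∏ _i ∈ Finset.range s, 1 := by simp
  _ ≤ ∏ i ∈ Finset.range s, Real.log^[i] x :=
    Finset.prod_le_prod (fun i _ => zero_le_one)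
      (fun i hi => hx i (lt_of_lt_of_le (Finset.mem_range.mp hi) hs))

lemma hasDerivAt_philog (K : ℕ) {x : ℝ} (hx : ∀ j < K+3, 0 < Real.log^[j] x) :
    HasDerivAt (philog K) (-(hfun K x)) x := by
  have hsum : HasDerivAt (fun y => ∑ j ∈ Finset.range (K+2), Real.log^[j+1] y)
      (∑ j ∈ Finset.range (K+2), (∏ i ∈ Finset.range (j+1), Real.log^[i] x)⁻¹) x := by
    apply HasDerivAt.fun_sum
    intro j hj
    exact hasDerivAt_iterLog (j+1) x fun i hi =>
      hx i (hi.trans_le (by have := Finset.mem_range.mp hj; omega))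
  have hlast : HasDerivAt (Real.log^[K+2]) (∏ i ∈ Finset.range (K+2), Real.log^[i] x)⁻¹ x :=
    hasDerivAt_iterLog (K+2) x fun i hi => hx i (by omega)
  have := (hsum.neg).sub hlast
  refine this.congr_deriv ?_
  simp [hfun]; ring

lemma exp_philog (K : ℕ) {x : ℝ} (hx : ∀ j < K+3, 0 < Real.log^[j] x) :
    Real.exp (philog K x)
      = (∏ i ∈ Finset.range (K+1), Real.log^[i] x)⁻¹ / (Real.log^[K+1] x)^2 := by
  have hexp : ∀ j : ℕ, j < K + 2 → Real.exp (Real.log^[j+1] x) = Real.log^[j] x := by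
    intro j hj
    rw [Function.iterate_succ_apply', Real.exp_log (hx j (by omega))]
  have h1 : Real.exp (philog K x)
      = (∏ j ∈ Finset.range (K+2), Real.log^[j] x)⁻¹ * (Real.log^[K+1] x)⁻¹ := by
    rw [philog, sub_eq_add_neg, Real.exp_add]
    congr 1
    · rw [Real.exp_neg, Real.exp_sum]
      congr 1
      refine Finset.prod_congr rfl fun j hj => hexp j (Finset.mem_range.mp hj)
    · rw [Real.exp_neg, hexp (K+1) (by omega)]
  rw [h1, Finset.prod_range_succ, div_eq_mul_inv, mul_inv, sq, mul_inv]
  ring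

lemma hasDerivAt_Gfun (K : ℕ) {x : ℝ} (hx : ∀ j < K+3, 0 < Real.log^[j] x) :
    HasDerivAt (Gfun K) (-(Real.exp (philog K x))) x := by
  have hL : HasDerivAt (Real.log^[K+1]) (∏ i ∈ Finset.range (K+1), Real.log^[i] x)⁻¹ x :=
    hasDerivAt_iterLog (K+1) x fun i hi => hx i (by omega)
  have := hL.inv (ne_of_gt (hx (K+1) (by omega)))
  refine this.congr_deriv ?_
  rw [exp_philog K hx]
  rw [neg_div, div_eq_mul_inv]

lemma hfun_pos (K : ℕ) {x : ℝ} (hx : ∀ j < K+3, 0 < Real.log^[j] x) : 0 < hfun K x := by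
  have h1 : 0 < (∏ i ∈ Finset.range (K+2), Real.log^[i] x)⁻¹ :=
    inv_pos.mpr (prod_iterLog_pos hx (by omega))
  have h2 : 0 ≤ ∑ j ∈ Finset.range (K+2), (∏ i ∈ Finset.range (j+1), Real.log^[i] x)⁻¹ :=
    Finset.sum_nonneg fun j hj => le_of_lt <| inv_pos.mpr <|
      prod_iterLog_pos hx (by have := Finset.mem_range.mp hj; omega)
  have := add_pos_of_nonneg_of_pos h2 h1
  exact this

lemma hfun_le (K : ℕ) {x : ℝ} (hx : ∀ j < K+3, 1 ≤ Real.log^[j] x) (hx0 : 0 < x) :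
    hfun K x ≤ (K+3)/x := by
  have key : ∀ s : ℕ, s ≤ K+2 → (∏ i ∈ Finset.range (s+1), Real.log^[i] x)⁻¹ ≤ 1/x := by
    intro s hs
    rw [one_div]
    apply inv_anti₀ hx0
    calc x = x * 1 := (mul_one x).symm
    _ ≤ x * ∏ i ∈ Finset.range s, Real.log^[i] (Real.log x) := by
        apply mul_le_mul_of_nonneg_left _ hx0.le
        apply one_le_prod_iterLog (m := K+2) _ hs
        intro j hj
        have := hx (j+1) (by omega)
        rwa [Function.iterate_succ_apply] at this
    _ = ∏ i ∈ Finset.range (s+1), Real.log^[i] x := by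
        rw [Finset.prod_range_succ']
        simp [Function.iterate_succ_apply, mul_comm]
  have h1 : ∑ j ∈ Finset.range (K+2), (∏ i ∈ Finset.range (j+1), Real.log^[i] x)⁻¹
      ≤ (K+2) * (1/x) := by
    calc _ ≤ ∑ _j ∈ Finset.range (K+2), 1/x :=
          Finset.sum_le_sum fun j hj => key j (by have := Finset.mem_range.mp hj; omega)
    _ = (K+2) * (1/x) := by
          rw [Finset.sum_const, Finset.card_range, nsmul_eq_mul]
          push_cast; ring
  have h2 : (∏ i ∈ Finset.range (K+2), Real.log^[i] x)⁻¹ ≤ 1/x := by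
    have := key (K+1) (by omega)
    simpa using this
  have := add_le_add h1 h2
  rw [hfun]
  calc _ ≤ (K+2) * (1/x) + 1/x := this
  _ = (K+3)/x := by ring

lemma hfun_antitone (K : ℕ) {x y : ℝ} (hx : ∀ j < K+3, 1 ≤ Real.log^[j] x) (hx0 : 0 < x)
    (hxy : x ≤ y) : hfun K y ≤ hfun K x := by
  have hpos : ∀ j < K+3, 0 < Real.log^[j] x := fun j hj => lt_of_lt_of_le one_pos (hx j hj)
  have hmono : ∀ s : ℕ, s ≤ K+2 →
      ∏ i ∈ Finset.range s, Real.log^[i] x ≤ ∏ i ∈ Finset.range s, Real.log^[i] y := by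
    intro s hs
    apply Finset.prod_le_prod (fun i hi => (hpos i (by have := Finset.mem_range.mp hi; omega)).le)
    intro i hi
    exact iterLog_le_iterLog i (fun j hj => hpos j (by have := Finset.mem_range.mp hi; omega)) hxy
  have hterm : ∀ s : ℕ, s ≤ K+2 →
      (∏ i ∈ Finset.range s, Real.log^[i] y)⁻¹ ≤ (∏ i ∈ Finset.range s, Real.log^[i] x)⁻¹ :=
    fun s hs => inv_anti₀ (prod_iterLog_pos hpos (by omega)) (hmono s hs)
  apply add_le_add
  · exact Finset.sum_le_sum fun j hj =>
      hterm (j+1) (by have := Finset.mem_range.mp hj; omega)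
  · exact hterm (K+2) le_rfl

section FTC

variable (K : ℕ) {X1 : ℝ}

lemma contAt_expphil (Hdom : ∀ x ≥ X1, ∀ j < K+3, 1 ≤ Real.log^[j] x) {x : ℝ} (hx : X1 ≤ x) :
    ContinuousAt (fun y => Real.exp (philog K y)) x := by
  have hφ : ContinuousAt (philog K) x :=
    (hasDerivAt_philog K fun j hj => lt_of_lt_of_le one_pos (Hdom x hx j hj)).continuousAt
  exact Real.continuous_exp.continuousAt.comp hφ

lemma Gfun_sub_eq_integral (Hdom : ∀ x ≥ X1, ∀ j < K+3, 1 ≤ Real.log^[j] x) {u v : ℝ} (hu : X1 ≤ u) (huv : u ≤ v) :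
    Gfun K u - Gfun K v = ∫ x in u..v, Real.exp (philog K x) := by
  have huIcc : Set.uIcc u v = Set.Icc u v := Set.uIcc_of_le huv
  have hmem : ∀ x ∈ Set.uIcc u v, X1 ≤ x := by
    intro x hxm
    rw [huIcc] at hxm
    exact hu.trans hxm.1
  have hderiv : ∀ x ∈ Set.uIcc u v, HasDerivAt (Gfun K) (-(Real.exp (philog K x))) x :=
    fun x hxm => hasDerivAt_Gfun K fun j hj =>
      lt_of_lt_of_le one_pos (Hdom x (hmem x hxm) j hj)
  have hcont : ContinuousOn (fun x => -(Real.exp (philog K x))) (Set.uIcc u v) :=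
    fun x hxm => ((contAt_expphil K Hdom (hmem x hxm)).neg).continuousWithinAt
  have hint : IntervalIntegrable (fun x => -(Real.exp (philog K x))) MeasureTheory.volume u v :=
    hcont.intervalIntegrable
  have h := intervalIntegral.integral_eq_sub_of_hasDerivAt hderiv hint
  rw [intervalIntegral.integral_neg] at h
  linarith

lemma Gfun_sub_pos (Hdom : ∀ x ≥ X1, ∀ j < K+3, 1 ≤ Real.log^[j] x) {t : ℝ} (ht : X1 ≤ t) : 0 < Gfun K t - Gfun K (t+1) := by
  rw [Gfun_sub_eq_integral K Hdom ht (by linarith)]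
  have huIcc : Set.uIcc t (t+1) = Set.Icc t (t+1) := Set.uIcc_of_le (by linarith)
  refine intervalIntegral.intervalIntegral_pos_of_pos_on
    (ContinuousOn.intervalIntegrable ?_) (fun x _ => Real.exp_pos _) (by linarith)
  intro x hxm
  rw [huIcc] at hxm
  exact (contAt_expphil K Hdom (ht.trans hxm.1)).continuousWithinAt

lemma key_ratio (hX1 : 0 < X1) (Hdom : ∀ x ≥ X1, ∀ j < K+3, 1 ≤ Real.log^[j] x) {t : ℝ} (ht : X1 ≤ t) :
    Gfun K t - Gfun K (t+1)
      ≤ Real.exp (hfun K t) * (Gfun K (t+1) - Gfun K (t+2)) := by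
  have h1 : Gfun K t - Gfun K (t+1) = ∫ x in t..t+1, Real.exp (philog K x) :=
    Gfun_sub_eq_integral K Hdom ht (by linarith)
  have h2 : Gfun K (t+1) - Gfun K (t+2) = ∫ x in t..t+1, Real.exp (philog K (x+1)) := by
    rw [Gfun_sub_eq_integral K Hdom (by linarith : X1 ≤ t+1) (by linarith),
      intervalIntegral.integral_comp_add_right (fun y => Real.exp (philog K y)) 1]
    ring_nf
  have huIcc : Set.uIcc t (t+1) = Set.Icc t (t+1) := Set.uIcc_of_le (by linarith)
  have pointwise : ∀ x ∈ Set.Icc t (t+1),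
      Real.exp (philog K x) ≤ Real.exp (hfun K t) * Real.exp (philog K (x+1)) := by
    intro x hxm
    obtain ⟨hx1, hx2⟩ := hxm
    have hXx : X1 ≤ x := ht.trans hx1
    have hcont : ContinuousOn (philog K) (Set.Icc x (x+1)) := by
      intro y hy
      exact ((hasDerivAt_philog K fun j hj =>
        lt_of_lt_of_le one_pos (Hdom y (hXx.trans hy.1) j hj)).continuousAt).continuousWithinAt
    have hderiv : ∀ y ∈ Set.Ioo x (x+1), HasDerivAt (philog K) (-(hfun K y)) y :=
      fun y hy => hasDerivAt_philog K fun j hj =>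
        lt_of_lt_of_le one_pos (Hdom y (hXx.trans hy.1.le) j hj)
    obtain ⟨ζ, hζ, hζeq⟩ := exists_hasDerivAt_eq_slope (philog K) (fun y => -(hfun K y))
      (by linarith : x < x + 1) hcont hderiv
    have hslope : philog K x - philog K (x+1) = hfun K ζ := by
      have he : (x + 1 - x) = 1 := by ring
      rw [he, div_one] at hζeq
      linarith
    have hζt : hfun K ζ ≤ hfun K t :=
      hfun_antitone K (fun j hj => Hdom t ht j hj) (hX1.trans_le ht) (by linarith [hζ.1])
    calc Real.exp (philog K x)
        = Real.exp (philog K x - philog K (x+1)) * Real.exp (philog K (x+1)) := by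
          rw [← Real.exp_add]; ring_nf
      _ ≤ Real.exp (hfun K t) * Real.exp (philog K (x+1)) := by
          apply mul_le_mul_of_nonneg_right _ (Real.exp_pos _).le
          exact Real.exp_le_exp.mpr (hslope ▸ hζt)
  have hint1 : IntervalIntegrable (fun x => Real.exp (philog K x)) MeasureTheory.volume t (t+1) := by
    apply ContinuousOn.intervalIntegrable
    intro x hxm
    rw [huIcc] at hxm
    exact (contAt_expphil K Hdom (ht.trans hxm.1)).continuousWithinAt
  have hint2 : IntervalIntegrable (fun x => Real.exp (hfun K t) * Real.exp (philog K (x+1)))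
      MeasureTheory.volume t (t+1) := by
    apply ContinuousOn.intervalIntegrable
    intro x hxm
    rw [huIcc] at hxm
    have hc1 : ContinuousAt (fun y : ℝ => y + 1) x := continuousAt_id.add continuousAt_const
    have hc2 : ContinuousAt (fun y : ℝ => Real.exp (philog K (y + 1))) x :=
      ContinuousAt.comp (g := fun y => Real.exp (philog K y))
        (f := fun y : ℝ => y + 1)
        (contAt_expphil K Hdom (by linarith [hxm.1] : X1 ≤ x + 1)) hc1
    exact (continuousAt_const.mul hc2).continuousWithinAt
  calc Gfun K t - Gfun K (t+1) = ∫ x in t..t+1, Real.exp (philog K x) := h1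
    _ ≤ ∫ x in t..t+1, Real.exp (hfun K t) * Real.exp (philog K (x+1)) :=
        intervalIntegral.integral_mono_on (by linarith) hint1 hint2 pointwise
    _ = Real.exp (hfun K t) * ∫ x in t..t+1, Real.exp (philog K (x+1)) := by
        rw [intervalIntegral.integral_const_mul]
    _ = Real.exp (hfun K t) * (Gfun K (t+1) - Gfun K (t+2)) := by rw [← h2]

end FTC

lemma sum_shift_Icc (g : ℕ → ℝ) (m : ℕ) :
    ∑ j ∈ Finset.range m, g (j+1) = ∑ i ∈ Finset.Icc 1 m, g i := by
  induction m with
  | zero => simp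
  | succ m ih =>
    rw [Finset.sum_range_succ, ih, Finset.sum_Icc_succ_top (by omega)]

lemma prod_range_iterLog_eq (x : ℝ) (j : ℕ) :
    ∏ i ∈ Finset.range (j+1), Real.log^[i] x
      = x * ∏ k ∈ Finset.Icc 1 j, Real.log^[k] x := by
  induction j with
  | zero => simp
  | succ j ih =>
    rw [Finset.prod_range_succ, ih, Finset.prod_Icc_succ_top (by omega), mul_assoc]

lemma hfun_eq (K : ℕ) (x : ℝ) :
    hfun K x = 1/x + (∑ i ∈ Finset.Icc 1 (K+1), (x * ∏ k ∈ Finset.Icc 1 i, Real.log^[k] x)⁻¹)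
      + (x * ∏ k ∈ Finset.Icc 1 (K+1), Real.log^[k] x)⁻¹ := by
  rw [hfun, Finset.sum_range_succ' (fun j => (∏ i ∈ Finset.range (j+1), Real.log^[i] x)⁻¹) (K+1)]
  have hs : ∑ j ∈ Finset.range (K+1), (∏ i ∈ Finset.range (j+1+1), Real.log^[i] x)⁻¹
      = ∑ i ∈ Finset.Icc 1 (K+1), (x * ∏ k ∈ Finset.Icc 1 i, Real.log^[k] x)⁻¹ := by
    rw [← sum_shift_Icc (fun i => (x * ∏ k ∈ Finset.Icc 1 i, Real.log^[k] x)⁻¹) (K+1)]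
    exact Finset.sum_congr rfl fun j _ => by rw [prod_range_iterLog_eq]
  rw [hs, prod_range_iterLog_eq x (K+1)]
  simp only [one_div, zero_add, Finset.prod_range_one, Function.iterate_zero, id_eq, mul_inv]
  ring

lemma iterLog_le_base {x : ℝ} (k : ℕ) (hk : 1 ≤ k) (h : ∀ j < k, 0 < Real.log^[j] x) :
    Real.log^[k] x ≤ Real.log x := by
  induction k with
  | zero => omega
  | succ k ih =>
    rcases Nat.eq_or_lt_of_le hk with h1 | h1
    · simp [← h1]
    · have hk1 : 1 ≤ k := by omega
      have hpos : 0 < Real.log^[k] x := h k (by omega)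
      calc Real.log^[k+1] x = Real.log (Real.log^[k] x) := Function.iterate_succ_apply' _ _ _
      _ ≤ Real.log^[k] x - 1 := Real.log_le_sub_one_of_pos hpos
      _ ≤ Real.log^[k] x := by linarith
      _ ≤ Real.log x := ih hk1 fun j hj => h j (by omega)
set_option maxHeartbeats 1000000



/-- If `a_n / a_{n+1} = 1 + 1/n + (1/n)·∑_{i=1}^{K} 1/∏_{k=1}^{i} ln_{(k)} n + R_n`
with `R_n ≥ c/(n · (ln_{(K+1)} n)^r · ∏_{k=1}^{K} ln_{(k)} n)` eventually, for some
`c > 0` and `0 ≤ r < 1`, then `∑ a_n` converges.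
Here `Real.log^[k]` is the `k`-th iterate of `Real.log`. -/
theorem extended_test_remainder_convergence
    (a : ℕ → ℝ) (ha : ∀ n, 0 < a n) (K : ℕ) (hK : 1 ≤ K) (R : ℕ → ℝ)
    (hratio : ∀ᶠ n : ℕ in Filter.atTop,
      a n / a (n + 1) =
        1 + 1 / (n : ℝ)
          + (1 / (n : ℝ)) * ∑ i ∈ Finset.Icc 1 K,
              1 / ∏ k ∈ Finset.Icc 1 i, Real.log^[k] (n : ℝ)
          + R n)
    (c : ℝ) (hc : 0 < c) (r : ℝ) (hr0 : 0 ≤ r) (hr1 : r < 1)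
    (hR : ∀ᶠ n : ℕ in Filter.atTop,
      R n ≥ c / ((n : ℝ) * (Real.log^[K + 1] (n : ℝ)) ^ r *
        ∏ k ∈ Finset.Icc 1 K, Real.log^[k] (n : ℝ))) :
    Summable a := by
  classical
  -- threshold for iterated logs
  have hev : ∀ᶠ x : ℝ in atTop, ∀ j ∈ Finset.range (K+3), 1 ≤ Real.log^[j] x := by
    rw [Filter.eventually_all_finset]
    exact fun j _ => (iterLog_tendsto j).eventually_ge_atTop 1
  obtain ⟨X0, hX0⟩ := Filter.eventually_atTop.mp hev
  set X1 : ℝ := max X0 1 with hX1def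
  have hX1pos : (0:ℝ) < X1 := lt_of_lt_of_le one_pos (le_max_right _ _)
  have Hdom : ∀ x ≥ X1, ∀ j < K+3, 1 ≤ Real.log^[j] x := fun x hx j hj =>
    hX0 x ((le_max_left _ _).trans hx) j (Finset.mem_range.mpr hj)
  set b : ℕ → ℝ := fun n => Gfun K (n:ℝ) - Gfun K ((n:ℝ)+1) with hbdef
  have hbapp : ∀ m : ℕ, b m = Gfun K (m:ℝ) - Gfun K ((m:ℝ)+1) := fun m => rfl
  have hcast : Tendsto (fun n : ℕ => (n:ℝ)) atTop atTop := tendsto_natCast_atTop_atTop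
  -- eventual facts
  have E1 : ∀ᶠ n : ℕ in atTop, X1 ≤ (n:ℝ) := hcast.eventually_ge_atTop X1
  have E4 : ∀ᶠ n : ℕ in atTop, ((K+3:ℕ):ℝ)/(n:ℝ) ≤ 1 := by
    filter_upwards [hcast.eventually_ge_atTop ((K+3:ℕ):ℝ), hcast.eventually_ge_atTop 1]
      with n h1 h2
    rw [div_le_one (by linarith)]
    exact h1
  have E5 : ∀ᶠ n : ℕ in atTop, 4/c ≤ (Real.log^[K+1] (n:ℝ))^(1-r) :=
    ((tendsto_rpow_atTop (by linarith : (0:ℝ) < 1 - r)).comp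
      ((iterLog_tendsto (K+1)).comp hcast)).eventually_ge_atTop (4/c)
  have E6 : ∀ᶠ n : ℕ in atTop,
      2*((K+3:ℕ):ℝ)^2 * (Real.log (n:ℝ))^(K+1) ≤ c * (n:ℝ) := by
    have hKpos : (0:ℝ) < 2*((K+3:ℕ):ℝ)^2 := by positivity
    have t0 := Real.tendsto_pow_log_div_mul_add_atTop 1 0 (K+1) one_ne_zero
    have t1 := (t0.comp hcast).eventually_lt_const
      (show (0:ℝ) < c/(2*((K+3:ℕ):ℝ)^2) by positivity)
    filter_upwards [t1, hcast.eventually_ge_atTop 1] with n h1 h2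
    simp only [Function.comp_apply, one_mul, add_zero] at h1
    rw [div_lt_iff₀ (by linarith)] at h1
    have he : 2*((K+3:ℕ):ℝ)^2 * (c/(2*((K+3:ℕ):ℝ)^2)) = c := by field_simp
    nlinarith
  -- the main eventual comparison
  have main : ∀ᶠ n : ℕ in atTop,
      (X1 ≤ (n:ℝ)) ∧ 0 < b n ∧ 0 < b (n+1) ∧ a (n+1) * b n ≤ a n * b (n+1) := by
    filter_upwards [E1, E4, E5, E6, hratio, hR] with n h1 h4 h5 h6 hrat hRn
    have hn0 : (0:ℝ) < n := lt_of_lt_of_le hX1pos h1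
    have Hn : ∀ j < K+3, 1 ≤ Real.log^[j] (n:ℝ) := Hdom _ h1
    have Hpos : ∀ j < K+3, 0 < Real.log^[j] (n:ℝ) := fun j hj => lt_of_lt_of_le one_pos (Hn j hj)
    have hb1 : 0 < b n := Gfun_sub_pos K Hdom h1
    have h1' : X1 ≤ ((n+1:ℕ):ℝ) := by push_cast; linarith
    have hb2 : 0 < b (n+1) := Gfun_sub_pos K Hdom h1'
    refine ⟨h1, hb1, hb2, ?_⟩
    -- notation
    set P : ℝ := ∏ k ∈ Finset.Icc 1 K, Real.log^[k] (n:ℝ) with hPdef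
    set L : ℝ := Real.log^[K+1] (n:ℝ) with hLdef
    have hL1 : 1 ≤ L := Hn (K+1) (by omega)
    have hL0 : (0:ℝ) < L := lt_of_lt_of_le one_pos hL1
    have hP0 : (0:ℝ) < P :=
      Finset.prod_pos fun k hk => Hpos k (by have := (Finset.mem_Icc.mp hk).2; omega)
    have hP1 : (1:ℝ) ≤ P := by
      calc (1:ℝ) = ∏ _k ∈ Finset.Icc 1 K, 1 := by simp
      _ ≤ P := Finset.prod_le_prod (fun k _ => zero_le_one)
          (fun k hk => Hn k (by have := (Finset.mem_Icc.mp hk).2; omega))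
    have hPL : ∏ k ∈ Finset.Icc 1 (K+1), Real.log^[k] (n:ℝ) = P * L :=
      Finset.prod_Icc_succ_top (by omega) _
    have hLr0 : (0:ℝ) < L ^ r := Real.rpow_pos_of_pos hL0 r
    -- the exp(hfun) ≤ ratio inequality
    have hfle : hfun K (n:ℝ) ≤ ((K+3:ℕ):ℝ)/(n:ℝ) := by
      have := hfun_le K Hn hn0
      convert this using 2
      push_cast; ring
    have hfpos : 0 < hfun K (n:ℝ) := hfun_pos K Hpos
    have hfle1 : hfun K (n:ℝ) ≤ 1 := hfle.trans h4
    have hexp2 : Real.exp (hfun K (n:ℝ)) ≤ 1 + hfun K (n:ℝ) + (hfun K (n:ℝ))^2 := by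
      have hb := Real.exp_bound (x := hfun K (n:ℝ))
        (by rw [abs_of_nonneg hfpos.le]; exact hfle1) (n := 2) (by norm_num)
      rw [abs_of_nonneg hfpos.le] at hb
      have hb' := (abs_le.mp hb).2
      simp [Finset.sum_range_succ, Nat.factorial] at hb'
      nlinarith [sq_nonneg (hfun K (n:ℝ))]
    -- (α)
    have hα : 4 * L ^ r ≤ c * L := by
      have hLsplit : L ^ ((1:ℝ)-r) * L ^ r = L := by
        rw [← Real.rpow_add hL0, sub_add_cancel, Real.rpow_one]
      have m1 : (4/c) * L^r ≤ L^((1:ℝ)-r) * L^r := mul_le_mul_of_nonneg_right h5 hLr0.le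
      have m2 : c * ((4/c) * L^r) = 4 * L^r := by field_simp
      have m3 := mul_le_mul_of_nonneg_left m1 hc.le
      rw [m2, hLsplit] at m3
      exact m3
    have hDpos : (0:ℝ) < (n:ℝ) * L^r * P := by positivity
    have hαfull : 2 * ((n:ℝ) * (P*L))⁻¹ ≤ (c/2) * ((n:ℝ)*L^r*P)⁻¹ := by
      rw [← div_eq_mul_inv, ← div_eq_mul_inv, div_le_div_iff₀ (by positivity) hDpos]
      have hstep : 2 * L^r ≤ c * L / 2 := by linarith
      calc 2 * ((n:ℝ)*L^r*P) = ((n:ℝ)*P) * (2 * L^r) := by ring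
      _ ≤ ((n:ℝ)*P) * (c * L / 2) := mul_le_mul_of_nonneg_left hstep (by positivity)
      _ = c/2 * ((n:ℝ)*(P*L)) := by ring
    -- (β)
    have hβ : (hfun K (n:ℝ))^2 ≤ (c/2) * ((n:ℝ)*L^r*P)⁻¹ := by
      have hlog1 : 1 ≤ Real.log (n:ℝ) := by simpa using Hn 1 (by omega)
      have hLlog : L ≤ Real.log (n:ℝ) := by
        have := iterLog_le_base (x := (n:ℝ)) (K+1) (by omega) (fun j hj => Hpos j (by omega))
        simpa [hLdef] using this
      have hPlog : P ≤ (Real.log (n:ℝ))^K := by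
        calc P ≤ ∏ _k ∈ Finset.Icc 1 K, Real.log (n:ℝ) := by
              apply Finset.prod_le_prod
              · intro k hk; exact (Hpos k (by have := (Finset.mem_Icc.mp hk).2; omega)).le
              · intro k hk
                obtain ⟨hk1, hk2⟩ := Finset.mem_Icc.mp hk
                exact iterLog_le_base k hk1 (fun j hj => Hpos j (by omega))
        _ = (Real.log (n:ℝ))^K := by rw [Finset.prod_const, Nat.card_Icc]; norm_num
      have hLr : L ^ r ≤ L := by
        calc L ^ r ≤ L ^ (1:ℝ) := Real.rpow_le_rpow_of_exponent_le hL1 (by linarith)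
        _ = L := Real.rpow_one L
      have hprod : L^r * P ≤ (Real.log (n:ℝ))^(K+1) := by
        calc L^r * P ≤ Real.log (n:ℝ) * (Real.log (n:ℝ))^K :=
              mul_le_mul (hLr.trans hLlog) hPlog hP0.le (by linarith)
        _ = (Real.log (n:ℝ))^(K+1) := by rw [pow_succ]; ring
      have hkey : 2*((K+3:ℕ):ℝ)^2 * (L^r * P) ≤ c * n := by
        calc 2*((K+3:ℕ):ℝ)^2 * (L^r * P) ≤ 2*((K+3:ℕ):ℝ)^2 * (Real.log (n:ℝ))^(K+1) := by
              apply mul_le_mul_of_nonneg_left hprod (by positivity)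
        _ ≤ c * n := h6
      rw [← div_eq_mul_inv, le_div_iff₀ hDpos]
      have m1 : (hfun K (n:ℝ))^2 * ((n:ℝ)*L^r*P) ≤ (((K+3:ℕ):ℝ)/(n:ℝ))^2 * ((n:ℝ)*L^r*P) :=
        mul_le_mul_of_nonneg_right (pow_le_pow_left₀ hfpos.le hfle 2) hDpos.le
      have m2 : (((K+3:ℕ):ℝ)/(n:ℝ))^2 * ((n:ℝ)*L^r*P) = ((K+3:ℕ):ℝ)^2 * (L^r*P) / (n:ℝ) := by
        field_simp
      have m3 : ((K+3:ℕ):ℝ)^2 * (L^r*P) / (n:ℝ) ≤ c/2 := by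
        rw [div_le_iff₀ hn0]; linarith
      linarith
    -- assemble: exp (hfun) ≤ a n / a (n+1)
    have hfeq : hfun K (n:ℝ) = 1/(n:ℝ)
        + (∑ i ∈ Finset.Icc 1 K, ((n:ℝ) * ∏ k ∈ Finset.Icc 1 i, Real.log^[k] (n:ℝ))⁻¹)
        + 2*((n:ℝ)*(P*L))⁻¹ := by
      rw [hfun_eq, Finset.sum_Icc_succ_top (show 1 ≤ K+1 by omega), hPL]
      ring
    have hsum_eq : (1/(n:ℝ)) * ∑ i ∈ Finset.Icc 1 K,
          1 / ∏ k ∈ Finset.Icc 1 i, Real.log^[k] (n:ℝ)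
        = ∑ i ∈ Finset.Icc 1 K, ((n:ℝ) * ∏ k ∈ Finset.Icc 1 i, Real.log^[k] (n:ℝ))⁻¹ := by
      rw [Finset.mul_sum]
      exact Finset.sum_congr rfl fun i _ => by rw [one_div, one_div, ← mul_inv]
    have hRge : 2*((n:ℝ)*(P*L))⁻¹ + (hfun K (n:ℝ))^2 ≤ R n := by
      have hc2 : c / ((n:ℝ)*L^r*P) = (c/2)*((n:ℝ)*L^r*P)⁻¹ + (c/2)*((n:ℝ)*L^r*P)⁻¹ := by
        rw [div_eq_mul_inv]; ring
      have := hRn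
      rw [hPdef, hLdef] at hc2 ⊢
      linarith [hαfull, hβ]
    have hratio_ge : Real.exp (hfun K (n:ℝ)) ≤ a n / a (n+1) := by
      rw [hrat, hsum_eq]
      calc Real.exp (hfun K (n:ℝ)) ≤ 1 + hfun K (n:ℝ) + (hfun K (n:ℝ))^2 := hexp2
      _ ≤ 1 + 1/(n:ℝ)
          + (∑ i ∈ Finset.Icc 1 K, ((n:ℝ) * ∏ k ∈ Finset.Icc 1 i, Real.log^[k] (n:ℝ))⁻¹)
          + R n := by linarith [hRge, hfeq]
    -- b-ratio
    have hkey2 := key_ratio K hX1pos Hdom h1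
    have hbeq : b (n+1) = Gfun K ((n:ℝ)+1) - Gfun K ((n:ℝ)+2) := by
      rw [hbapp (n+1)]; push_cast; ring_nf
    have hbr : b n ≤ Real.exp (hfun K (n:ℝ)) * b (n+1) := by
      rw [hbeq]; exact hkey2
    have hfinal : b n ≤ (a n / a (n+1)) * b (n+1) :=
      le_trans hbr (mul_le_mul_of_nonneg_right hratio_ge hb2.le)
    have hane : a (n+1) ≠ 0 := (ha (n+1)).ne'
    have he2 : a (n+1) * ((a n / a (n+1)) * b (n+1)) = a n * b (n+1) := by
      field_simp
    calc a (n+1) * b n ≤ a (n+1) * ((a n / a (n+1)) * b (n+1)) :=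
          mul_le_mul_of_nonneg_left hfinal (ha (n+1)).le
    _ = a n * b (n+1) := he2
  -- extract and conclude
  obtain ⟨N, hN⟩ := Filter.eventually_atTop.mp main
  have hbpos : ∀ n, N ≤ n → 0 < b n := fun n hn => (hN n hn).2.1
  have hstep : ∀ n, N ≤ n → a (n+1) * b n ≤ a n * b (n+1) := fun n hn => (hN n hn).2.2.2
  set C := a N / b N with hCdef
  have hcomp : ∀ m, a (N + m) ≤ C * b (N + m) := by
    intro m
    induction m with
    | zero =>
      simp only [Nat.add_zero, hCdef]
      rw [div_mul_cancel₀ _ (hbpos N le_rfl).ne']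
    | succ m ih =>
      have h1 := hstep (N+m) (Nat.le_add_right _ _)
      have hb0 := hbpos (N+m) (Nat.le_add_right _ _)
      have hb1 := hbpos (N+m+1) (by omega)
      have h2 : a (N+m+1) * b (N+m) ≤ C * b (N+m+1) * b (N+m) := by
        nlinarith [mul_le_mul_of_nonneg_right ih hb1.le]
      have h3 := le_of_mul_le_mul_right h2 hb0
      exact h3
  have hGnonneg : ∀ n : ℕ, N ≤ n → 0 ≤ Gfun K (n:ℝ) := by
    intro n hn
    have hXn : X1 ≤ (n:ℝ) := (hN n hn).1
    have := Hdom _ hXn (K+1) (by omega)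
    rw [Gfun]
    positivity
  have hbsum : Summable (fun m => b (N + m)) := by
    apply summable_of_sum_range_le (c := Gfun K (N:ℝ))
    · intro m; exact (hbpos (N+m) (Nat.le_add_right _ _)).le
    · intro m
      have htel : ∑ i ∈ Finset.range m, b (N+i) = Gfun K ((N:ℝ)) - Gfun K ((N+m:ℕ):ℝ) := by
        have h := Finset.sum_range_sub' (fun i => Gfun K ((N+i:ℕ):ℝ)) m
        simp only [Nat.add_zero] at h
        rw [← h]
        apply Finset.sum_congr rfl
        intro i _
        rw [hbapp (N+i)]; push_cast; ring_nf
      rw [htel]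
      have := hGnonneg (N+m) (Nat.le_add_right _ _)
      linarith
  have hasum : Summable (fun m => a (N+m)) :=
    Summable.of_nonneg_of_le (fun m => (ha _).le) hcomp (hbsum.mul_left C)
  have heq : (fun m => a (m + N)) = fun m => a (N + m) := funext fun m => by rw [Nat.add_comm]
  exact (summable_nat_add_iff N).mp (heq ▸ hasum)
end

section
/- (Series form of the recurrence criterion for birth-and-death processes.) Let (λ_n) and (μ_n) be sequences of real numbers in (0, ∞), and suppose there exist an integer K ≥ 1 and an index n_0 such that for all n > n_0, λ_n/μ_n ≤ 1 + 1/n + (1/n)·∑_{i=1}^{K} 1/(∏_{j=1}^{i} ln_{(j)} n). Then the series ∑_{n=1}^∞ ∏_{k=1}^{n} (μ_k/λ_k) diverges, i.e. ∑_{n=1}^∞ ∏_{k=1}^{n} (μ_k/λ_k) = ∞ (equivalently, by Karlin–McGregor's criterion, the birth-and-death process with birth rates λ_n and death rates μ_n is recurrent). -/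
open Real Filter Finset

noncomputable def itexp : ℕ → ℝ
  | 0 => 1
  | n+1 => Real.exp (itexp n)

lemma itexp_ge_one (n : ℕ) : 1 ≤ itexp n := by
  induction n with
  | zero => simp [itexp]
  | succ n ih => exact le_trans (by linarith) (Real.add_one_le_exp (itexp n))

noncomputable def Pp (i : ℕ) (x : ℝ) : ℝ := ∏ j ∈ Finset.Icc 1 i, Real.log^[j] x

noncomputable def Qq (i : ℕ) (x : ℝ) : ℝ := x * Pp i x

lemma iter_ge (m : ℕ) : ∀ j ≤ m, ∀ x : ℝ, itexp m ≤ x → itexp (m - j) ≤ Real.log^[j] x := by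
  intro j
  induction j with
  | zero => intro _ x hx; simpa using hx
  | succ j ih =>
    intro hj x hx
    have hj' : j ≤ m := Nat.le_of_succ_le hj
    have h1 : itexp (m - j) ≤ Real.log^[j] x := ih hj' x hx
    have hmj : m - j = (m - (j+1)) + 1 := by omega
    rw [hmj] at h1
    rw [Function.iterate_succ_apply']
    calc itexp (m - (j+1)) = Real.log (Real.exp (itexp (m - (j+1)))) := (Real.log_exp _).symm
    _ ≤ Real.log (Real.log^[j] x) := Real.log_le_log (Real.exp_pos _) (by simpa [itexp] using h1)

lemma iter_one_le (m : ℕ) (j : ℕ) (hj : j ≤ m) (x : ℝ) (hx : itexp m ≤ x) :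
    1 ≤ Real.log^[j] x := le_trans (itexp_ge_one _) (iter_ge m j hj x hx)

lemma iter_mono (m : ℕ) : ∀ j ≤ m, ∀ x y : ℝ, itexp m ≤ x → x ≤ y →
    Real.log^[j] x ≤ Real.log^[j] y := by
  intro j
  induction j with
  | zero => intro _ x y _ hxy; simpa using hxy
  | succ j ih =>
    intro hj x y hx hxy
    have hj' : j ≤ m := Nat.le_of_succ_le hj
    rw [Function.iterate_succ_apply', Function.iterate_succ_apply']
    exact Real.log_le_log (lt_of_lt_of_le one_pos (iter_one_le m j hj' x hx)) (ih hj' x y hx hxy)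

lemma one_le_Pp (m i : ℕ) (hi : i ≤ m) (x : ℝ) (hx : itexp m ≤ x) : 1 ≤ Pp i x := by
  rw [Pp, ← Finset.prod_const_one (s := Finset.Icc 1 i)]
  refine Finset.prod_le_prod (by intro j _; norm_num) ?_
  intro j hj
  exact iter_one_le m j (le_trans (Finset.mem_Icc.mp hj).2 hi) x hx

lemma Pp_mono (m i : ℕ) (hi : i ≤ m) (x y : ℝ) (hx : itexp m ≤ x) (hxy : x ≤ y) :
    Pp i x ≤ Pp i y := by
  refine Finset.prod_le_prod ?_ ?_
  · intro j hj
    exact le_trans zero_le_one (iter_one_le m j (le_trans (Finset.mem_Icc.mp hj).2 hi) x hx)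
  · intro j hj
    exact iter_mono m j (le_trans (Finset.mem_Icc.mp hj).2 hi) x y hx hxy

lemma Qq_pos (m i : ℕ) (hi : i ≤ m) (x : ℝ) (hx : itexp m ≤ x) : 0 < Qq i x := by
  have hx1 : (1:ℝ) ≤ x := le_trans (itexp_ge_one m) hx
  exact mul_pos (by linarith) (lt_of_lt_of_le one_pos (one_le_Pp m i hi x hx))

lemma Qq_mono (m i : ℕ) (hi : i ≤ m) (x y : ℝ) (hx : itexp m ≤ x) (hxy : x ≤ y) :
    Qq i x ≤ Qq i y := by
  have hx1 : (1:ℝ) ≤ x := le_trans (itexp_ge_one m) hx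
  exact mul_le_mul hxy (Pp_mono m i hi x y hx hxy)
    (le_trans zero_le_one (one_le_Pp m i hi x hx)) (by linarith)

lemma Pp_zero (x : ℝ) : Pp 0 x = 1 := by simp [Pp]

lemma Pp_succ (i : ℕ) (x : ℝ) : Pp (i+1) x = Pp i x * Real.log^[i+1] x :=
  Finset.prod_Icc_succ_top (Nat.succ_le_succ (Nat.zero_le i)) _

lemma log_diff_le (x : ℝ) (hx : 0 < x) :
    1/(x+1) ≤ Real.log (x+1) - Real.log x ∧ Real.log (x+1) - Real.log x ≤ 1/x := by
  have hx1 : 0 < x + 1 := by linarith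
  constructor
  · have h := Real.log_le_sub_one_of_pos (show 0 < x/(x+1) by positivity)
    rw [Real.log_div (ne_of_gt hx) (ne_of_gt hx1)] at h
    have : x/(x+1) - 1 = -(1/(x+1)) := by field_simp; ring
    linarith [this ▸ h]
  · have h := Real.log_le_sub_one_of_pos (show 0 < (x+1)/x by positivity)
    rw [Real.log_div (ne_of_gt hx1) (ne_of_gt hx)] at h
    have : (x+1)/x - 1 = 1/x := by field_simp; ring
    linarith [this ▸ h]

lemma key (K : ℕ) : ∀ i ≤ K, ∀ x : ℝ, itexp (K+2) ≤ x →
    1 / Qq i (x+1) ≤ Real.log^[i+1] (x+1) - Real.log^[i+1] x ∧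
    Real.log^[i+1] (x+1) - Real.log^[i+1] x ≤ 1 / Qq i x := by
  intro i
  induction i with
  | zero =>
    intro _ x hx
    have hx0 : 0 < x := lt_of_lt_of_le one_pos (le_trans (itexp_ge_one _) hx)
    have hx1 : itexp (K+2) ≤ x + 1 := by linarith
    simpa [Qq, Pp_zero] using log_diff_le x hx0
  | succ i ih =>
    intro hi x hx
    have hi' : i ≤ K := Nat.le_of_succ_le hi
    have hxx : itexp (K+2) ≤ x + 1 := by linarith
    obtain ⟨hlo, hhi⟩ := ih hi' x hx
    set a := Real.log^[i+1] x with ha_def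
    set b := Real.log^[i+1] (x+1) with hb_def
    have ha1 : 1 ≤ a := iter_one_le (K+2) (i+1) (by omega) x hx
    have hb1 : 1 ≤ b := iter_one_le (K+2) (i+1) (by omega) (x+1) hxx
    have hQx : 0 < Qq i x := Qq_pos (K+2) i (by omega) x hx
    have hQx1 : 0 < Qq i (x+1) := Qq_pos (K+2) i (by omega) (x+1) hxx
    have hab : 0 < b - a := lt_of_lt_of_le (by positivity) hlo
    have hQs : Qq (i+1) x = Qq i x * a := by rw [Qq, Qq, Pp_succ]; ring
    have hQs1 : Qq (i+1) (x+1) = Qq i (x+1) * b := by rw [Qq, Qq, Pp_succ]; ring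
    have e1 : Real.log^[i+1+1] (x+1) = Real.log b := Function.iterate_succ_apply' _ _ _
    have e2 : Real.log^[i+1+1] x = Real.log a := Function.iterate_succ_apply' _ _ _
    rw [e1, e2, hQs, hQs1]
    have ha0 : 0 < a := by linarith
    have hb0 : 0 < b := by linarith
    constructor
    · -- lower: log b - log a ≥ (b-a)/b ≥ 1/(Qq i (x+1) * b)
      have h1 : Real.log (a/b) ≤ a/b - 1 := Real.log_le_sub_one_of_pos (by positivity)
      rw [Real.log_div (ne_of_gt ha0) (ne_of_gt hb0)] at h1
      have h2 : (b - a)/b ≤ Real.log b - Real.log a := by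
        have : a/b - 1 = -((b-a)/b) := by field_simp; ring
        linarith [this ▸ h1]
      refine le_trans ?_ h2
      rw [div_le_div_iff₀ (by positivity) hb0]
      calc 1 * b = (1/Qq i (x+1)) * (Qq i (x+1) * b) := by field_simp
        _ ≤ (b-a) * (Qq i (x+1) * b) := mul_le_mul_of_nonneg_right hlo (by positivity)
    · have h1 : Real.log (b/a) ≤ b/a - 1 := Real.log_le_sub_one_of_pos (by positivity)
      rw [Real.log_div (ne_of_gt hb0) (ne_of_gt ha0)] at h1
      have h2 : Real.log b - Real.log a ≤ (b - a)/a := by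
        have : b/a - 1 = (b-a)/a := by field_simp
        linarith [this ▸ h1]
      refine le_trans h2 ?_
      rw [div_le_div_iff₀ ha0 (by positivity)]
      calc (b - a) * (Qq i x * a) ≤ (1/Qq i x) * (Qq i x * a) :=
            mul_le_mul_of_nonneg_right hhi (by positivity)
        _ = a := by field_simp
        _ = 1 * a := by ring

lemma telescope (f : ℕ → ℝ) (a N : ℕ) (h : a ≤ N + 1) :
    ∑ k ∈ Finset.Icc a N, (f (k+1) - f k) = f (N+1) - f a := by
  rw [← Finset.Ico_add_one_right_eq_Icc, Finset.sum_Ico_eq_sum_range]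
  have e : ∀ i : ℕ, f (a + i + 1) - f (a + i) = f (a + (i+1)) - f (a + i) := by
    intro i; rw [Nat.add_assoc]
  simp_rw [e]
  rw [Finset.sum_range_sub (fun i => f (a + i)) (N + 1 - a), Nat.add_sub_cancel' h]
  simp

lemma tendsto_iter_log (j : ℕ) : Tendsto (Real.log^[j]) atTop atTop := by
  induction j with
  | zero => simpa using tendsto_id
  | succ j ih =>
    rw [Function.iterate_succ']
    exact Real.tendsto_log_atTop.comp ih

lemma Lg_eq (K : ℕ) (x : ℝ) (hpos : ∀ j, 1 ≤ j → j ≤ K → 0 < Real.log^[j] x) (hx : 0 < x) :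
    ∑ i ∈ Finset.range (K+1), Real.log^[i+1] x = Real.log (Qq K x) := by
  have hp : (0:ℝ) < Pp K x :=
    Finset.prod_pos fun j hj => hpos j (Finset.mem_Icc.mp hj).1 (Finset.mem_Icc.mp hj).2
  rw [Qq, Real.log_mul (ne_of_gt hx) (ne_of_gt hp), Pp, Real.log_prod]
  · have e : ∀ j : ℕ, Real.log (Real.log^[j] x) = Real.log^[j+1] x := fun j =>
      (Function.iterate_succ_apply' _ _ _).symm
    simp_rw [e]
    rw [← Finset.Ico_add_one_right_eq_Icc, Finset.sum_Ico_eq_sum_range, Finset.sum_range_succ']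
    simp only [Nat.add_sub_cancel, zero_add]
    rw [add_comm]
    congr 1
    exact Finset.sum_congr rfl fun i _ => by rw [Nat.add_comm 1 i]
  · intro j hj
    exact ne_of_gt (hpos j (Finset.mem_Icc.mp hj).1 (Finset.mem_Icc.mp hj).2)


/-- **Series form of the recurrence criterion for birth-and-death processes.**
The series `∑_{n=1}^∞ ∏_{k=1}^n μ_k/λ_k` diverges to `∞`, stated as: the partial
sums tend to infinity. Here `Real.log^[k]` is the `k`-th iterate of `Real.log`. -/
theorem birth_death_recurrent
    (lam mu : ℕ → ℝ) (hlam : ∀ n, 0 < lam n) (hmu : ∀ n, 0 < mu n)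
    (K : ℕ) (hK : 1 ≤ K) (n₀ : ℕ)
    (h : ∀ n > n₀,
      lam n / mu n ≤
        1 + 1 / (n : ℝ)
          + (1 / (n : ℝ)) * ∑ i ∈ Finset.Icc 1 K,
              1 / ∏ j ∈ Finset.Icc 1 i, Real.log^[j] (n : ℝ)) :
    Filter.Tendsto
      (fun N : ℕ => ∑ n ∈ Finset.Icc 1 N, ∏ k ∈ Finset.Icc 1 n, mu k / lam k)
      Filter.atTop Filter.atTop := by
  classical
  set T := itexp (K+2) with hT_def
  set N₁ := max (n₀+1) (⌈T⌉₊+1) with hN₁_def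
  have hN₁n₀ : n₀ < N₁ := lt_of_lt_of_le (Nat.lt_succ_self n₀) (le_max_left _ _)
  have hN₁1 : 1 ≤ N₁ := le_trans (Nat.succ_le_succ (Nat.zero_le _)) (le_max_left _ _)
  have hTN₁ : T ≤ (N₁:ℝ) := by
    calc T ≤ (⌈T⌉₊ : ℝ) := Nat.le_ceil T
    _ ≤ ((⌈T⌉₊+1 : ℕ) : ℝ) := by push_cast; linarith
    _ ≤ (N₁:ℝ) := Nat.cast_le.mpr (le_max_right _ _)
  have hTk : ∀ k : ℕ, N₁ ≤ k → T ≤ (k:ℝ) := fun k hk =>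
    le_trans hTN₁ (Nat.cast_le.mpr hk)
  set φ : ℕ → ℝ := fun k => ∑ i ∈ Finset.range (K+1), 1 / Qq i (k:ℝ) with hφ_def
  set Lg : ℕ → ℝ := fun k => ∑ i ∈ Finset.range (K+1), Real.log^[i+1] (k:ℝ) with hLg_def
  have hφ0 : ∀ k : ℕ, N₁ ≤ k → 0 ≤ φ k := by
    intro k hk
    rw [hφ_def]
    refine Finset.sum_nonneg fun i hi => ?_
    have hi' : i ≤ K := Nat.lt_succ_iff.mp (Finset.mem_range.mp hi)
    have := Qq_pos (K+2) i (by omega) (k:ℝ) (hTk k hk)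
    positivity
  -- Step 1
  have step1 : ∀ k, N₁ ≤ k → Real.log (lam k / mu k)
      ≤ (Lg (k+1) - φ (k+1)) - (Lg k - φ k) := by
    intro k hk
    have hk' : n₀ < k := lt_of_lt_of_le hN₁n₀ hk
    have hTk' : T ≤ (k:ℝ) := hTk k hk
    have hk0 : (0:ℝ) < k := lt_of_lt_of_le one_pos (le_trans (itexp_ge_one _) hTk')
    have hbb : lam k / mu k ≤ 1 + 1/(k:ℝ)
        + (1/(k:ℝ)) * ∑ i ∈ Finset.Icc 1 K, 1 / Pp i (k:ℝ) := h k hk'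
    have hφk : φ k = 1/(k:ℝ) + (1/(k:ℝ)) * ∑ i ∈ Finset.Icc 1 K, 1 / Pp i (k:ℝ) := by
      rw [hφ_def]
      simp only
      rw [Finset.sum_range_succ', Finset.mul_sum]
      rw [← Finset.Ico_add_one_right_eq_Icc, Finset.sum_Ico_eq_sum_range]
      simp only [Nat.add_sub_cancel, Qq, Pp_zero, mul_one]
      rw [add_comm]
      congr 1
      refine Finset.sum_congr rfl fun i _ => ?_
      rw [Nat.add_comm 1 i, div_mul_div_comm, one_mul]
    have h1 : Real.log (lam k / mu k) ≤ φ k := by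
      have hlm : 0 < lam k / mu k := div_pos (hlam k) (hmu k)
      have hls := Real.log_le_sub_one_of_pos hlm
      rw [hφk]
      linarith
    have h2 : φ (k+1) ≤ Lg (k+1) - Lg k := by
      rw [hLg_def, hφ_def]
      simp only
      rw [← Finset.sum_sub_distrib]
      refine Finset.sum_le_sum fun i hi => ?_
      have hi' : i ≤ K := Nat.lt_succ_iff.mp (Finset.mem_range.mp hi)
      have hcast : ((k+1:ℕ):ℝ) = (k:ℝ)+1 := by push_cast; ring
      rw [hcast]
      exact (key K i hi' (k:ℝ) hTk').1
    linarith
  -- Step 2: telescoped sum bound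
  have step2 : ∀ N, N₁ ≤ N → ∑ k ∈ Finset.Icc N₁ N, Real.log (lam k / mu k)
      ≤ (Lg (N+1) - φ (N+1)) - (Lg N₁ - φ N₁) := by
    intro N hN
    calc ∑ k ∈ Finset.Icc N₁ N, Real.log (lam k / mu k)
        ≤ ∑ k ∈ Finset.Icc N₁ N, ((Lg (k+1) - φ (k+1)) - (Lg k - φ k)) :=
          Finset.sum_le_sum fun k hk => step1 k (Finset.mem_Icc.mp hk).1
      _ = _ := telescope (fun k => Lg k - φ k) N₁ N (by omega)
  have ha_pos : ∀ n, 0 < ∏ k ∈ Finset.Icc 1 n, mu k / lam k := fun n =>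
    Finset.prod_pos fun k _ => div_pos (hmu k) (hlam k)
  have hlog_a : ∀ N, Real.log (∏ k ∈ Finset.Icc 1 N, mu k / lam k)
      = - ∑ k ∈ Finset.Icc 1 N, Real.log (lam k / mu k) := by
    intro N
    rw [Real.log_prod (fun k _ => ne_of_gt (div_pos (hmu k) (hlam k)))]
    rw [← Finset.sum_neg_distrib]
    refine Finset.sum_congr rfl fun k _ => ?_
    rw [Real.log_div (ne_of_gt (hmu k)) (ne_of_gt (hlam k)),
        Real.log_div (ne_of_gt (hlam k)) (ne_of_gt (hmu k))]
    ring
  have hsplit : ∀ N, N₁ ≤ N → ∑ k ∈ Finset.Icc 1 N, Real.log (lam k / mu k)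
      = (∑ k ∈ Finset.Ico 1 N₁, Real.log (lam k / mu k))
        + ∑ k ∈ Finset.Icc N₁ N, Real.log (lam k / mu k) := by
    intro N hN
    rw [← Finset.Ico_add_one_right_eq_Icc, ← Finset.Ico_add_one_right_eq_Icc]
    exact (Finset.sum_Ico_consecutive _ hN₁1 (by omega)).symm
  obtain ⟨C₂, hC₂⟩ : ∃ c : ℝ, c = ∑ k ∈ Finset.Ico 1 N₁, Real.log (lam k / mu k) := ⟨_, rfl⟩
  obtain ⟨D, hD⟩ : ∃ d : ℝ, d = (Lg N₁ - φ N₁) - C₂ := ⟨_, rfl⟩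
  -- Step 4
  have step4 : ∀ N, N₁ ≤ N →
      Real.exp D / Qq K ((N+1:ℕ):ℝ) ≤ ∏ k ∈ Finset.Icc 1 N, mu k / lam k := by
    intro N hN
    have hφN : 0 ≤ φ (N+1) := hφ0 (N+1) (by omega)
    have hlog : D - Lg (N+1) ≤ Real.log (∏ k ∈ Finset.Icc 1 N, mu k / lam k) := by
      rw [hlog_a N, hsplit N hN, ← hC₂]
      have := step2 N hN
      rw [hD]
      linarith
    have hexp := Real.exp_le_exp.mpr hlog
    rw [Real.exp_log (ha_pos N)] at hexp
    refine le_trans (le_of_eq ?_) hexp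
    rw [Real.exp_sub]
    congr 1
    have hTN1 : T ≤ ((N+1:ℕ):ℝ) := le_trans (hTk N hN) (by push_cast; linarith)
    have hQpos : 0 < Qq K ((N+1:ℕ):ℝ) := Qq_pos (K+2) K (by omega) _ hTN1
    have hx0 : (0:ℝ) < ((N+1:ℕ):ℝ) := by positivity
    have hLgN : Lg (N+1) = Real.log (Qq K ((N+1:ℕ):ℝ)) := by
      rw [hLg_def]
      exact Lg_eq K _ (fun j hj1 hjK =>
        lt_of_lt_of_le one_pos (iter_one_le (K+2) j (by omega) _ hTN1)) hx0
    rw [hLgN, Real.exp_log hQpos]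
  set G : ℕ → ℝ := fun m => Real.log^[K+1] ((m:ℕ):ℝ) with hG
  -- Step 5
  have step5 : ∀ n, N₁ ≤ n → Real.exp D * (G (n+1+1) - G (n+1))
      ≤ ∏ k ∈ Finset.Icc 1 n, mu k / lam k := by
    intro n hn
    refine le_trans ?_ (step4 n hn)
    have hTn : T ≤ (n:ℝ) := hTk n hn
    have hTn1 : T ≤ (n:ℝ)+1 := by linarith
    have hkey := (key K K le_rfl ((n:ℝ)+1) hTn1).2
    have hQpos : 0 < Qq K ((n:ℝ)+1) := Qq_pos (K+2) K (by omega) _ hTn1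
    rw [div_eq_mul_inv, ← one_div]
    have hc : ((n+1:ℕ):ℝ) = (n:ℝ)+1 := by push_cast; ring
    rw [hc]
    refine mul_le_mul_of_nonneg_left ?_ (le_of_lt (Real.exp_pos D))
    rw [hG]
    simp only
    have c1 : ((n+1+1:ℕ):ℝ) = (n:ℝ)+1+1 := by push_cast; ring
    have c2 : ((n+1:ℕ):ℝ) = (n:ℝ)+1 := by push_cast; ring
    rw [c1, c2]
    exact hkey
  -- Step 6
  have step6 : ∀ N, N₁ ≤ N → Real.exp D * (G (N+1+1) - G (N₁+1))
      ≤ ∑ n ∈ Finset.Icc 1 N, ∏ k ∈ Finset.Icc 1 n, mu k / lam k := by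
    intro N hN
    calc Real.exp D * (G (N+1+1) - G (N₁+1))
        = ∑ n ∈ Finset.Icc N₁ N, Real.exp D * (G (n+1+1) - G (n+1)) := by
          rw [← Finset.mul_sum]
          congr 1
          exact (telescope (fun m => G (m+1)) N₁ N (by omega)).symm
      _ ≤ ∑ n ∈ Finset.Icc N₁ N, ∏ k ∈ Finset.Icc 1 n, mu k / lam k :=
          Finset.sum_le_sum fun n hn => step5 n (Finset.mem_Icc.mp hn).1
      _ ≤ ∑ n ∈ Finset.Icc 1 N, ∏ k ∈ Finset.Icc 1 n, mu k / lam k :=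
          Finset.sum_le_sum_of_subset_of_nonneg
            (Finset.Icc_subset_Icc (by omega) le_rfl)
            (fun n _ _ => le_of_lt (ha_pos n))
  -- Step 7: tendsto
  have hG2 : Tendsto (fun N : ℕ => G (N+1+1)) atTop atTop := by
    have : (fun N : ℕ => G (N+1+1)) = (Real.log^[K+1]) ∘ (fun n : ℕ => (n:ℝ)) ∘ (fun n : ℕ => n + 2) := by
      funext N
      rw [hG]
      rfl
    rw [this]
    exact (tendsto_iter_log (K+1)).comp (tendsto_natCast_atTop_atTop.comp (tendsto_add_atTop_nat 2))
  have hL : Tendsto (fun N : ℕ => Real.exp D * (G (N+1+1) - G (N₁+1))) atTop atTop := by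
    apply Tendsto.const_mul_atTop (Real.exp_pos D)
    simp only [sub_eq_add_neg]
    exact tendsto_atTop_add_const_right _ _ hG2
  refine tendsto_atTop_mono' atTop ?_ hL
  filter_upwards [eventually_ge_atTop N₁] with N hN
  exact step6 N hN
end
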